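/- arXiv:math/0502313 — 3 statements merged into one kernel-verified Lean document; each statement's English description precedes it below -/
import Mathlib

section
/- Let R = R₁ + ⋯ + R_k be an orthogonal union of nonempty irreducible root systems of norm 2 in ℝⁿ, with Rᵢ ⊆ Vᵢ of dimension nᵢ and Coxeter number hᵢ = |Rᵢ|/nᵢ. If R is a spherical 3-design, then all hᵢ are equal (R is strongly eutactic). The proof uses the harmonic polynomials f_{i,j}(x) = ⟨xᵢ,xᵢ⟩/(2nᵢ) - ⟨xⱼ,xⱼ⟩/(2nⱼ), where x = x₁+⋯+x_k is the orthogonal decomposition. -/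
open MvPolynomial

noncomputable section

def IsHarmonic {n : ℕ} (P : MvPolynomial (Fin n) ℝ) : Prop :=
  ∑ i : Fin n, pderiv i (pderiv i P) = 0

def evalAt {n : ℕ} (x : EuclideanSpace ℝ (Fin n)) (P : MvPolynomial (Fin n) ℝ) : ℝ :=
  eval (fun i => x i) P

namespace EutacticAux

variable {n : ℕ}

/-- The linear form `x ↦ ⟪v, x⟫` as a polynomial. -/
def linForm (v : EuclideanSpace ℝ (Fin n)) : MvPolynomial (Fin n) ℝ :=
  ∑ a : Fin n, C (v a) * X a

lemma evalAt_linForm (x v : EuclideanSpace ℝ (Fin n)) :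
    evalAt x (linForm v) = ∑ a : Fin n, v a * x a := by
  simp [linForm, evalAt]

lemma inner_eq_sum (v x : EuclideanSpace ℝ (Fin n)) :
    (inner ℝ v x : ℝ) = ∑ a : Fin n, v a * x a := by
  simp [PiLp.inner_apply, RCLike.inner_apply, mul_comm]

lemma pderiv_linForm (c : Fin n) (v : EuclideanSpace ℝ (Fin n)) :
    pderiv c (linForm v) = C (v c) := by
  unfold linForm
  rw [map_sum, Finset.sum_eq_single c]
  · simp [pderiv_mul, pderiv_C]
  · intro b _ hb
    simp [pderiv_mul, pderiv_C, pderiv_X_of_ne hb]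
  · simp

lemma linForm_homog (v : EuclideanSpace ℝ (Fin n)) : (linForm v).IsHomogeneous 1 :=
  IsHomogeneous.sum _ _ _ fun a _ => (isHomogeneous_X ℝ a).C_mul _

lemma lap_sq (v : EuclideanSpace ℝ (Fin n)) :
    ∑ c : Fin n, pderiv c (pderiv c ((linForm v) ^ 2)) = C (2 * ∑ a : Fin n, v a * v a) := by
  have h1 : ∀ c : Fin n, pderiv c ((linForm v) ^ 2)
      = C (v c) * linForm v + linForm v * C (v c) := by
    intro c; rw [sq, pderiv_mul, pderiv_linForm]
  have hC2 : (C 2 : MvPolynomial (Fin n) ℝ) = 2 := map_ofNat C 2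
  have h2 : ∀ c : Fin n, pderiv c (pderiv c ((linForm v) ^ 2)) = C (2 * (v c * v c)) := by
    intro c
    rw [h1, map_add, pderiv_mul, pderiv_mul, pderiv_C, pderiv_linForm]
    rw [C_mul, C_mul, hC2]
    ring
  rw [Finset.sum_congr rfl fun c _ => h2 c, ← map_sum, Finset.mul_sum]

end EutacticAux

open EutacticAux in
/-- if an orthogonal union `R = R₁ + ⋯ + R_k` of nonempty root systems of
norm 2, with `Rᵢ` spanning the pairwise-orthogonal subspaces `Vᵢ` whose direct sum is `ℝⁿ`,
is a spherical 3-design, then all Coxeter numbers `hᵢ = |Rᵢ|/dim Vᵢ` coincide, i.e. `R`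
is strongly eutactic. -/
theorem union_design_implies_strongly_eutactic (n k : ℕ)
    (V : Fin k → Submodule ℝ (EuclideanSpace ℝ (Fin n)))
    (horth : ∀ i j, i ≠ j → ∀ x ∈ V i, ∀ y ∈ V j, (inner ℝ x y : ℝ) = 0)
    (hspanall : (⨆ i, V i) = ⊤)
    (R : Fin k → Finset (EuclideanSpace ℝ (Fin n)))
    (hne : ∀ i, (R i).Nonempty)
    (hzero : ∀ i, (0 : EuclideanSpace ℝ (Fin n)) ∉ R i)
    (hsub : ∀ i, ∀ x ∈ R i, x ∈ V i)
    (hnorm : ∀ i, ∀ x ∈ R i, (inner ℝ x x : ℝ) = 2)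
    (hrefl : ∀ i, ∀ x ∈ R i, ∀ y ∈ R i, x - (inner ℝ x y : ℝ) • y ∈ R i)
    (hspan : ∀ i, Submodule.span ℝ (R i : Set (EuclideanSpace ℝ (Fin n))) = V i)
    (hdesign : ∀ j : ℕ, 1 ≤ j → j ≤ 3 → ∀ P : MvPolynomial (Fin n) ℝ,
        P.IsHomogeneous j → IsHarmonic P →
        ∑ i : Fin k, ∑ x ∈ R i, evalAt x P = 0) :
    ∀ i j : Fin k,
      ((R i).card : ℝ) / (Module.finrank ℝ (V i)) =
        ((R j).card : ℝ) / (Module.finrank ℝ (V j)) := by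
  classical
  intro i j
  -- dimensions are positive
  have hdim : ∀ l : Fin k, 0 < Module.finrank ℝ (V l) := by
    intro l
    obtain ⟨x, hx⟩ := hne l
    have hx0 : x ≠ 0 := fun h => hzero l (h ▸ hx)
    have : Nontrivial (V l) :=
      ⟨⟨x, hsub l x hx⟩, 0, fun h => hx0 (by simpa using congrArg Subtype.val h)⟩
    exact Module.finrank_pos
  -- orthonormal bases of the subspaces
  set m : Fin k → ℕ := fun l => Module.finrank ℝ (V l) with hm
  set b : ∀ l : Fin k, OrthonormalBasis (Fin (m l)) ℝ (V l) :=
    fun l => stdOrthonormalBasis ℝ (V l) with hb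
  -- the quadratic form polynomials
  set Q : Fin k → MvPolynomial (Fin n) ℝ :=
    fun l => ∑ t : Fin (m l), (linForm ((b l t : EuclideanSpace ℝ (Fin n)))) ^ 2 with hQ
  have hQhomog : ∀ l, (Q l).IsHomogeneous 2 := by
    intro l
    refine IsHomogeneous.sum _ _ _ fun t _ => ?_
    simpa using (linForm_homog ((b l t : EuclideanSpace ℝ (Fin n)))).pow 2
  have hQlap : ∀ l, ∑ c : Fin n, pderiv c (pderiv c (Q l)) = C (2 * (m l : ℝ)) := by
    intro l
    rw [hQ]
    simp only [map_sum]
    rw [Finset.sum_comm]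
    have key : ∀ t : Fin (m l),
        ∑ c : Fin n, pderiv c (pderiv c ((linForm ((b l t : EuclideanSpace ℝ (Fin n)))) ^ 2))
          = C 2 := by
      intro t
      rw [lap_sq]
      have h1 : ∑ a : Fin n, (b l t : EuclideanSpace ℝ (Fin n)) a
          * (b l t : EuclideanSpace ℝ (Fin n)) a = 1 := by
        have hn1 := (b l).orthonormal.1 t
        have h2 : (inner ℝ ((b l t : EuclideanSpace ℝ (Fin n)))
            ((b l t : EuclideanSpace ℝ (Fin n))) : ℝ) = 1 := by
          rw [← Submodule.coe_inner, real_inner_self_eq_norm_sq]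
          simp [hn1]
        rw [← inner_eq_sum, h2]
      rw [h1, mul_one]
    rw [Finset.sum_congr rfl fun t _ => key t, Finset.sum_const, Finset.card_univ,
      Fintype.card_fin, nsmul_eq_mul]
    rw [mul_comm, ← map_natCast (C : ℝ →+* MvPolynomial (Fin n) ℝ) (m l), ← C_mul,
      mul_comm]
  -- evaluation of Q l on root vectors
  have hQeval : ∀ l l' : Fin k, ∀ x ∈ R l',
      evalAt x (Q l) = if l = l' then 2 else 0 := by
    intro l l' x hx
    have hev : evalAt x (Q l)
        = ∑ t : Fin (m l), (inner ℝ ((b l t : EuclideanSpace ℝ (Fin n))) x : ℝ) ^ 2 := by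
      rw [hQ]
      simp only [evalAt, map_sum, map_pow]
      refine Finset.sum_congr rfl fun t _ => ?_
      rw [inner_eq_sum]
      exact congrArg (· ^ 2) (evalAt_linForm x _)
    by_cases h : l = l'
    · subst h
      rw [if_pos rfl, hev]
      have hxV : x ∈ V l := hsub l x hx
      have hco : ∀ t : Fin (m l), (inner ℝ ((b l t : EuclideanSpace ℝ (Fin n))) x : ℝ)
          = (inner ℝ (b l t) (⟨x, hxV⟩ : V l) : ℝ) := fun t => rfl
      simp only [hco]
      have hpars := (b l).sum_inner_mul_inner (⟨x, hxV⟩ : V l) (⟨x, hxV⟩ : V l)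
      have hsq : ∑ t : Fin (m l), (inner ℝ (b l t) (⟨x, hxV⟩ : V l) : ℝ) ^ 2
          = (inner ℝ (⟨x, hxV⟩ : V l) (⟨x, hxV⟩ : V l) : ℝ) := by
        rw [← hpars]
        refine Finset.sum_congr rfl fun t _ => ?_
        rw [sq, real_inner_comm]
      rw [hsq]
      have hco2 : (inner ℝ (⟨x, hxV⟩ : V l) (⟨x, hxV⟩ : V l) : ℝ) = (inner ℝ x x : ℝ) := rfl
      rw [hco2, hnorm l x hx]
    · rw [hev, if_neg h]
      refine Finset.sum_eq_zero fun t _ => ?_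
      rw [horth l l' h _ (b l t).2 x (hsub l' x hx)]
      norm_num
  -- the test polynomial
  set P : MvPolynomial (Fin n) ℝ := C (m j : ℝ) * Q i - C (m i : ℝ) * Q j with hP
  have hPhomog : P.IsHomogeneous 2 :=
    ((hQhomog i).C_mul _).sub ((hQhomog j).C_mul _)
  have hPharm : IsHarmonic P := by
    unfold IsHarmonic
    have hptw : ∀ c : Fin n, pderiv c (pderiv c P)
        = C (m j : ℝ) * pderiv c (pderiv c (Q i)) - C (m i : ℝ) * pderiv c (pderiv c (Q j)) := by
      intro c
      rw [hP, map_sub, pderiv_C_mul, pderiv_C_mul, map_sub, pderiv_C_mul, pderiv_C_mul]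
    rw [Finset.sum_congr rfl fun c _ => hptw c, Finset.sum_sub_distrib,
      ← Finset.mul_sum, ← Finset.mul_sum, hQlap, hQlap, ← C_mul, ← C_mul, ← map_sub]
    rw [show (m j : ℝ) * (2 * (m i : ℝ)) - (m i : ℝ) * (2 * (m j : ℝ)) = 0 by ring, map_zero]
  have hsum := hdesign 2 (by norm_num) (by norm_num) P hPhomog hPharm
  -- compute the sum
  have hsumQ : ∀ l : Fin k, ∑ l' : Fin k, ∑ x ∈ R l', evalAt x (Q l)
      = 2 * ((R l).card : ℝ) := by
    intro l
    rw [Finset.sum_eq_single l]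
    · rw [Finset.sum_congr rfl fun x hx => (hQeval l l x hx).trans (if_pos rfl)]
      rw [Finset.sum_const, nsmul_eq_mul, mul_comm]
    · intro l' _ hl'
      refine Finset.sum_eq_zero fun x hx => ?_
      rw [hQeval l l' x hx, if_neg (Ne.symm hl')]
    · intro h; exact absurd (Finset.mem_univ l) h
  have hkey : (m j : ℝ) * (2 * ((R i).card : ℝ)) = (m i : ℝ) * (2 * ((R j).card : ℝ)) := by
    have hx : ∀ x : EuclideanSpace ℝ (Fin n), evalAt x P
        = (m j : ℝ) * evalAt x (Q i) - (m i : ℝ) * evalAt x (Q j) := by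
      intro x
      simp [hP, evalAt]
    rw [Finset.sum_congr rfl (fun l _ => Finset.sum_congr rfl fun x _ => hx x)] at hsum
    simp only [Finset.sum_sub_distrib, ← Finset.mul_sum] at hsum
    rw [hsumQ i, hsumQ j] at hsum
    linarith
  have hmi : (m i : ℝ) ≠ 0 := Nat.cast_ne_zero.mpr (hdim i).ne'
  have hmj : (m j : ℝ) ≠ 0 := Nat.cast_ne_zero.mpr (hdim j).ne'
  rw [div_eq_div_iff hmi hmj]
  nlinarith [hkey]

end
end

section
/- Let R be a nonempty strongly eutactic root system of norm 2 in ℝⁿ with Coxeter number h. Then for each j, the condition that ∑_{x∈R} f(x) = 0 for all harmonic homogeneous polynomials f of degree 2j is equivalent to the numerical identity 2·Q^{(2j)}(1) + (4h-8)·Q^{(2j)}(1/2) + (nh - 4h + 6)·Q^{(2j)}(0) = 0, where Q^{(2j)} is the Gegenbauer polynomial of degree 2j normalized by Q^{(2j)}(1) = dim Har_{2j}(ℝⁿ). In particular, for 2j = 4 this condition reads (n-10)h + 6(n+2) = 0. -/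
open MvPolynomial

noncomputable section

lemma eval_mul_homog {n d : ℕ} {P : MvPolynomial (Fin n) ℝ} (hP : P.IsHomogeneous d)
    (t : ℝ) (x : Fin n → ℝ) :
    eval (fun i => t * x i) P = t ^ d * eval x P := by
  rw [eval_eq', eval_eq', Finset.mul_sum]
  refine Finset.sum_congr rfl fun e he => ?_
  have h1 : ∑ i, e i = d := by
    have h2 := hP (mem_support_iff.mp he)
    rw [Finsupp.weight_apply] at h2
    rw [← h2, Finsupp.sum]
    simp only [Pi.one_apply, smul_eq_mul, mul_one]
    exact (Finset.sum_subset (Finset.subset_univ _)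
      (by intro i _ hi; exact Finsupp.notMem_support_iff.mp hi)).symm
  calc (coeff e P) * ∏ i, (t * x i) ^ e i
      = (coeff e P) * ((∏ i, t ^ e i) * ∏ i, x i ^ e i) := by
        rw [← Finset.prod_mul_distrib]; simp [mul_pow]
    _ = t ^ d * ((coeff e P) * ∏ i, x i ^ e i) := by
        rw [Finset.prod_pow_eq_pow_sum, h1]; ring

lemma evalAt_smul {n d : ℕ} {P : MvPolynomial (Fin n) ℝ} (hP : P.IsHomogeneous d)
    (t : ℝ) (x : EuclideanSpace ℝ (Fin n)) :
    evalAt (t • x) P = t ^ d * evalAt x P := by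
  unfold evalAt
  have hfun : (fun i => (t • x) i) = fun i => t * x i := by
    funext i; simp [smul_eq_mul]
  rw [hfun]
  exact eval_mul_homog hP t (fun i => x i)

lemma evalAt_neg {n d : ℕ} {P : MvPolynomial (Fin n) ℝ} (hP : P.IsHomogeneous (2 * d))
    (x : EuclideanSpace ℝ (Fin n)) :
    evalAt (-x) P = evalAt x P := by
  rw [← neg_one_smul ℝ x, evalAt_smul hP]
  simp [pow_mul]

/-- for a nonempty strongly eutactic root system `R` of norm 2 in `ℝⁿ`
with Coxeter number `h` (so `|R| = nh`, and for each root the inner products with the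
other roots are distributed as `N₂ = N₋₂ = 1`, `N₁ = N₋₁ = 2h-4`, `N₀ = nh-4h+6`),
and `Q` the degree-`2j` Gegenbauer reproducing kernel of the harmonic homogeneous
polynomials of degree `2j` on the unit sphere, the design condition `(C_{2j})` holds
iff `2Q(1) + (4h-8)Q(1/2) + (nh-4h+6)Q(0) = 0`; for `2j = 4` and the explicit `Q`,
this identity is equivalent to `(n-10)h + 6(n+2) = 0`. -/
theorem strongly_eutactic_design_condition (n : ℕ) (hn : 1 ≤ n) (h : ℕ) (hh : 0 < h)
    (j : ℕ) (hj : 0 < j)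
    (R : Finset (EuclideanSpace ℝ (Fin n))) (hne : R.Nonempty)
    (hnorm : ∀ x ∈ R, (inner ℝ x x : ℝ) = 2)
    (hcard : R.card = n * h)
    (hN2 : ∀ x ∈ R, (R.filter (fun y => (inner ℝ x y : ℝ) = 2)).card = 1)
    (hNm2 : ∀ x ∈ R, (R.filter (fun y => (inner ℝ x y : ℝ) = -2)).card = 1)
    (hN1 : ∀ x ∈ R, (R.filter (fun y => (inner ℝ x y : ℝ) = 1)).card = 2 * h - 4)
    (hNm1 : ∀ x ∈ R, (R.filter (fun y => (inner ℝ x y : ℝ) = -1)).card = 2 * h - 4)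
    (hN0 : ∀ x ∈ R, (R.filter (fun y => (inner ℝ x y : ℝ) = 0)).card = n * h - 4 * h + 6)
    (hvals : ∀ x ∈ R, ∀ y ∈ R, (inner ℝ x y : ℝ) = 0 ∨ (inner ℝ x y : ℝ) = 1 ∨
        (inner ℝ x y : ℝ) = -1 ∨ (inner ℝ x y : ℝ) = 2 ∨ (inner ℝ x y : ℝ) = -2)
    (Q : ℝ → ℝ)
    (hker : ∀ lam : (EuclideanSpace ℝ (Fin n)) →₀ ℝ,
        (∀ x ∈ lam.support, (inner ℝ x x : ℝ) = 1) →
        ((∑ x ∈ lam.support, ∑ y ∈ lam.support, lam x * lam y * Q (inner ℝ x y)) = 0 ↔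
          ∀ P : MvPolynomial (Fin n) ℝ, P.IsHomogeneous (2 * j) → IsHarmonic P →
            ∑ y ∈ lam.support, lam y * evalAt y P = 0)) :
    ((∀ P : MvPolynomial (Fin n) ℝ, P.IsHomogeneous (2 * j) → IsHarmonic P →
        ∑ x ∈ R, evalAt x P = 0) ↔
      2 * Q 1 + (4 * (h : ℝ) - 8) * Q (1 / 2) + ((n : ℝ) * h - 4 * h + 6) * Q 0 = 0) ∧
    ((j = 2 ∧ (∀ t : ℝ, Q t =
          ((n : ℝ) * (n + 6) / 24) * ((n + 2) * (n + 4) * t ^ 4 - 6 * (n + 2) * t ^ 2 + 3))) →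
      (2 * Q 1 + (4 * (h : ℝ) - 8) * Q (1 / 2) + ((n : ℝ) * h - 4 * h + 6) * Q 0 = 0 ↔
        ((n : ℝ) - 10) * h + 6 * (n + 2) = 0)) := by
  classical
  constructor
  · -- Part 1
    obtain ⟨x₀, hx₀⟩ := hne
    set c : ℝ := Real.sqrt (1 / 2) with hcdef
    have hc : c * c = 1 / 2 := Real.mul_self_sqrt (by norm_num)
    have hc0 : c ≠ 0 := by
      have : (0 : ℝ) < c := Real.sqrt_pos.mpr (by norm_num)
      exact ne_of_gt this
    have hin : ∀ x y : EuclideanSpace ℝ (Fin n),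
        (inner ℝ (c • x) (c • y) : ℝ) = 1 / 2 * (inner ℝ x y : ℝ) := by
      intro x y
      rw [real_inner_smul_left, real_inner_smul_right, ← mul_assoc, hc]
    have hunit : ∀ x ∈ R, (inner ℝ (c • x) (c • x) : ℝ) = 1 := by
      intro x hx; rw [hin, hnorm x hx]; norm_num
    -- counting identity
    have hcnt : n * h = 1 + 1 + (2 * h - 4) + (2 * h - 4) + (n * h - 4 * h + 6) := by
      have hpt : ∀ y ∈ R, (1 : ℕ) =
          (if (inner ℝ x₀ y : ℝ) = 2 then 1 else 0) + (if (inner ℝ x₀ y : ℝ) = -2 then 1 else 0)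
          + (if (inner ℝ x₀ y : ℝ) = 1 then 1 else 0) + (if (inner ℝ x₀ y : ℝ) = -1 then 1 else 0)
          + (if (inner ℝ x₀ y : ℝ) = 0 then 1 else 0) := by
        intro y hy
        rcases hvals x₀ hx₀ y hy with h' | h' | h' | h' | h' <;> rw [h'] <;> norm_num
      calc n * h = R.card := hcard.symm
        _ = ∑ _y ∈ R, (1 : ℕ) := Finset.card_eq_sum_ones R
        _ = ∑ y ∈ R, ((if (inner ℝ x₀ y : ℝ) = 2 then 1 else 0)
              + (if (inner ℝ x₀ y : ℝ) = -2 then 1 else 0)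
              + (if (inner ℝ x₀ y : ℝ) = 1 then 1 else 0)
              + (if (inner ℝ x₀ y : ℝ) = -1 then 1 else 0)
              + (if (inner ℝ x₀ y : ℝ) = 0 then 1 else 0)) := Finset.sum_congr rfl hpt
        _ = 1 + 1 + (2 * h - 4) + (2 * h - 4) + (n * h - 4 * h + 6) := by
            rw [Finset.sum_add_distrib, Finset.sum_add_distrib, Finset.sum_add_distrib,
              Finset.sum_add_distrib, ← Finset.sum_filter, ← Finset.sum_filter,
              ← Finset.sum_filter, ← Finset.sum_filter, ← Finset.sum_filter,
              Finset.sum_const, Finset.sum_const, Finset.sum_const, Finset.sum_const,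
              Finset.sum_const, hN2 x₀ hx₀, hNm2 x₀ hx₀, hN1 x₀ hx₀, hNm1 x₀ hx₀, hN0 x₀ hx₀]
            simp
    have hh2 : 2 ≤ h := by
      obtain ⟨m, hm⟩ : ∃ m, n * h = m := ⟨_, rfl⟩
      rw [hm] at hcnt; omega
    have hcast1 : ((2 * h - 4 : ℕ) : ℝ) = 2 * (h : ℝ) - 4 := by
      have h4 : 4 ≤ 2 * h := by omega
      push_cast [h4]; ring
    have hcast0 : ((n * h - 4 * h + 6 : ℕ) : ℝ) = (n : ℝ) * h - 4 * h + 6 := by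
      obtain ⟨k, hkdef⟩ : ∃ k, n * h - 4 * h + 6 = k := ⟨_, rfl⟩
      rw [hkdef] at hcnt ⊢
      have hk : k + 4 * h = n * h + 6 := by
        obtain ⟨m, hm⟩ : ∃ m, n * h = m := ⟨_, rfl⟩
        rw [hm] at hcnt ⊢; omega
      have := congrArg (fun t : ℕ => (t : ℝ)) hk
      push_cast at this
      linarith
    -- Q(-1) = Q(1)
    have hQm1 : Q (-1) = Q 1 := by
      set u := c • x₀ with hudef
      have huu : (inner ℝ u u : ℝ) = 1 := hunit x₀ hx₀
      have humu : (inner ℝ u (-u) : ℝ) = -1 := by rw [inner_neg_right, huu]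
      have hmuu : (inner ℝ (-u) u : ℝ) = -1 := by rw [inner_neg_left, huu]
      have hmumu : (inner ℝ (-u) (-u) : ℝ) = 1 := by rw [inner_neg_neg, huu]
      have hune : u ≠ -u := by
        intro e
        have h1 : (inner ℝ u u : ℝ) = inner ℝ u (-u) := congrArg (fun w => (inner ℝ u w : ℝ)) e
        rw [huu, humu] at h1; norm_num at h1
      set lam2 := Finsupp.single u (1 : ℝ) + Finsupp.single (-u) (-1 : ℝ) with hl2
      have hs2 : lam2.support = {u, -u} := by
        rw [hl2, Finsupp.support_add_eq, Finsupp.support_single_ne_zero u one_ne_zero,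
          Finsupp.support_single_ne_zero (-u) (by norm_num), ← Finset.insert_eq]
        rw [Finsupp.support_single_ne_zero u one_ne_zero,
          Finsupp.support_single_ne_zero (-u) (by norm_num)]
        simp [hune, Ne.symm hune]
      have hval_u : lam2 u = 1 := by
        simp [hl2, Finsupp.single_apply, Ne.symm hune]
      have hval_mu : lam2 (-u) = -1 := by
        simp [hl2, Finsupp.single_apply, hune]
      have hker2 := hker lam2 (by
        rw [hs2]
        intro z hz
        rcases Finset.mem_insert.mp hz with rfl | hz'
        · exact huu
        · rw [Finset.mem_singleton.mp hz']; exact hmumu)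
      rw [hs2] at hker2
      have hKS : (∑ x ∈ ({u, -u} : Finset _), ∑ y ∈ ({u, -u} : Finset _),
          lam2 x * lam2 y * Q (inner ℝ x y)) = 2 * Q 1 - 2 * Q (-1) := by
        simp only [Finset.sum_pair hune, hval_u, hval_mu, huu, humu, hmuu, hmumu]
        ring
      have hdes : ∀ P : MvPolynomial (Fin n) ℝ, P.IsHomogeneous (2 * j) → IsHarmonic P →
          ∑ y ∈ ({u, -u} : Finset _), lam2 y * evalAt y P = 0 := by
        intro P h1 _h2
        simp only [Finset.sum_pair hune, hval_u, hval_mu]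
        rw [evalAt_neg h1]
        ring
      have := hker2.mpr hdes
      rw [hKS] at this
      linarith
    -- Q(-1/2) = Q(1/2) when 2h-4 ≠ 0
    have hΔ : (2 * h - 4 : ℕ) ≠ 0 → Q (-(1 / 2)) = Q (1 / 2) := by
      intro h4
      have hpos : 0 < (R.filter (fun y => (inner ℝ x₀ y : ℝ) = 1)).card := by
        rw [hN1 x₀ hx₀]; omega
      obtain ⟨y₀, hy₀⟩ := Finset.card_pos.mp hpos
      obtain ⟨hy₀R, hxy⟩ := Finset.mem_filter.mp hy₀
      set u := c • x₀ with hudef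
      set v := c • y₀ with hvdef
      have huu : (inner ℝ u u : ℝ) = 1 := hunit x₀ hx₀
      have hvv : (inner ℝ v v : ℝ) = 1 := hunit y₀ hy₀R
      have huv : (inner ℝ u v : ℝ) = 1 / 2 := by
        rw [hudef, hvdef, hin, hxy]; norm_num
      have hvu : (inner ℝ v u : ℝ) = 1 / 2 := by rw [real_inner_comm, huv]
      have humv : (inner ℝ u (-v) : ℝ) = -(1 / 2) := by rw [inner_neg_right, huv]
      have hmvu : (inner ℝ (-v) u : ℝ) = -(1 / 2) := by rw [inner_neg_left, hvu]
      have hvmv : (inner ℝ v (-v) : ℝ) = -1 := by rw [inner_neg_right, hvv]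
      have hmvv : (inner ℝ (-v) v : ℝ) = -1 := by rw [inner_neg_left, hvv]
      have hmvmv : (inner ℝ (-v) (-v) : ℝ) = 1 := by rw [inner_neg_neg, hvv]
      have huvne : u ≠ v := by
        intro e
        have h1 : (inner ℝ u u : ℝ) = inner ℝ u v := congrArg (fun w => (inner ℝ u w : ℝ)) e
        rw [huu, huv] at h1; norm_num at h1
      have humvne : u ≠ -v := by
        intro e
        have h1 : (inner ℝ u u : ℝ) = inner ℝ u (-v) := congrArg (fun w => (inner ℝ u w : ℝ)) e
        rw [huu, humv] at h1; norm_num at h1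
      have hvmvne : v ≠ -v := by
        intro e
        have h1 : (inner ℝ v v : ℝ) = inner ℝ v (-v) := congrArg (fun w => (inner ℝ v w : ℝ)) e
        rw [hvv, hvmv] at h1; norm_num at h1
      -- single-point kernel
      have hQ1iff : Q 1 = 0 ↔ (∀ P : MvPolynomial (Fin n) ℝ, P.IsHomogeneous (2 * j) →
          IsHarmonic P → evalAt u P = 0) := by
        have hs1 : (Finsupp.single u (1 : ℝ)).support = {u} :=
          Finsupp.support_single_ne_zero u one_ne_zero
        have hk1 := hker (Finsupp.single u (1 : ℝ)) (by
          rw [hs1]; intro z hz; rw [Finset.mem_singleton.mp hz]; exact huu)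
        rw [hs1] at hk1
        simp only [Finset.sum_singleton, Finsupp.single_eq_same, one_mul] at hk1
        rw [huu] at hk1
        exact hk1
      -- the three-point family
      have main : ∀ a : ℝ, a ≠ 0 →
          ((a ^ 2 * Q 1 + 2 * a * (Q (1 / 2) - Q (-(1 / 2))) + 2 * Q 1 - 2 * Q (-1) = 0) ↔
            (∀ P : MvPolynomial (Fin n) ℝ, P.IsHomogeneous (2 * j) → IsHarmonic P →
              a * evalAt u P = 0)) := by
        intro a ha
        set lam3 := Finsupp.single u a +
          (Finsupp.single v (1 : ℝ) + Finsupp.single (-v) (-1 : ℝ)) with hl3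
        have hsvv : (Finsupp.single v (1 : ℝ) + Finsupp.single (-v) (-1 : ℝ)).support
            = insert v {-v} := by
          rw [Finsupp.support_add_eq, Finsupp.support_single_ne_zero v one_ne_zero,
            Finsupp.support_single_ne_zero (-v) (by norm_num), ← Finset.insert_eq]
          rw [Finsupp.support_single_ne_zero v one_ne_zero,
            Finsupp.support_single_ne_zero (-v) (by norm_num)]
          simp [hvmvne, Ne.symm hvmvne]
        have hs3 : lam3.support = insert u (insert v {-v}) := by
          rw [hl3, Finsupp.support_add_eq, Finsupp.support_single_ne_zero u ha, hsvv,
            ← Finset.insert_eq]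
          rw [Finsupp.support_single_ne_zero u ha, hsvv]
          simp [huvne, humvne, Ne.symm huvne, Ne.symm humvne]
        have hval_u : lam3 u = a := by
          simp [hl3, Finsupp.single_apply, Ne.symm huvne, Ne.symm humvne]
        have hval_v : lam3 v = 1 := by
          simp [hl3, Finsupp.single_apply, huvne, Ne.symm hvmvne]
        have hval_mv : lam3 (-v) = -1 := by
          simp [hl3, Finsupp.single_apply, humvne, hvmvne]
        have hker3 := hker lam3 (by
          rw [hs3]
          intro z hz
          rcases Finset.mem_insert.mp hz with rfl | hz'
          · exact huu
          rcases Finset.mem_insert.mp hz' with rfl | hz''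
          · exact hvv
          · rw [Finset.mem_singleton.mp hz'']; exact hmvmv)
        rw [hs3] at hker3
        have h1m : u ∉ insert v ({-v} : Finset _) := by simp [huvne, humvne]
        have h2m : v ∉ ({-v} : Finset _) := by simp [hvmvne]
        have hKS : (∑ x ∈ insert u (insert v ({-v} : Finset _)),
            ∑ y ∈ insert u (insert v ({-v} : Finset _)), lam3 x * lam3 y * Q (inner ℝ x y))
            = a ^ 2 * Q 1 + 2 * a * (Q (1 / 2) - Q (-(1 / 2))) + 2 * Q 1 - 2 * Q (-1) := by
          simp only [Finset.sum_insert h1m, Finset.sum_insert h2m, Finset.sum_singleton,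
            hval_u, hval_v, hval_mv, huu, huv, humv, hvu, hvv, hvmv, hmvu, hmvv, hmvmv]
          ring
        have hDS : ∀ P : MvPolynomial (Fin n) ℝ, P.IsHomogeneous (2 * j) →
            (∑ y ∈ insert u (insert v ({-v} : Finset _)), lam3 y * evalAt y P)
              = a * evalAt u P := by
          intro P h1
          simp only [Finset.sum_insert h1m, Finset.sum_insert h2m, Finset.sum_singleton,
            hval_u, hval_v, hval_mv]
          rw [evalAt_neg h1]
          ring
        rw [← hKS]
        refine hker3.trans ?_
        constructor
        · intro H P h1 h2; rw [← hDS P h1]; exact H P h1 h2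
        · intro H P h1 h2; rw [hDS P h1]; exact H P h1 h2
      -- case analysis
      by_cases hD : ∀ P : MvPolynomial (Fin n) ℝ, P.IsHomogeneous (2 * j) → IsHarmonic P →
          evalAt u P = 0
      · have e1 := (main 1 one_ne_zero).mpr (fun P h1 h2 => by rw [hD P h1 h2]; ring)
        have e2 := (main (-1) (by norm_num)).mpr (fun P h1 h2 => by rw [hD P h1 h2]; ring)
        norm_num at e1 e2
        linarith
      · push_neg at hD
        obtain ⟨P₀, hP₀1, hP₀2, hP₀⟩ := hD
        have hQ1 : Q 1 ≠ 0 := fun hq => hP₀ (hQ1iff.mp hq P₀ hP₀1 hP₀2)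
        by_contra hne'
        have hΔne : Q (1 / 2) - Q (-(1 / 2)) ≠ 0 := fun e => hne' (by linarith)
        set a := -2 * (Q (1 / 2) - Q (-(1 / 2))) / Q 1 with hadef
        have ha : a ≠ 0 := div_ne_zero (mul_ne_zero (by norm_num) hΔne) hQ1
        have hzero : a ^ 2 * Q 1 + 2 * a * (Q (1 / 2) - Q (-(1 / 2))) + 2 * Q 1 - 2 * Q (-1)
            = 0 := by
          rw [hQm1, hadef]
          field_simp
          ring
        have hfin := (main a ha).mp hzero P₀ hP₀1 hP₀2
        rcases mul_eq_zero.mp hfin with h' | h'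
        · exact ha h'
        · exact hP₀ h'
    -- main design equivalence
    set T := R.image (fun x => c • x) with hTdef
    have hinj : ∀ x ∈ R, ∀ y ∈ R, c • x = c • y → x = y := by
      intro x _ y _ hxy
      exact smul_right_injective _ hc0 hxy
    set lamR := Finsupp.indicator T (fun _ _ => (1 : ℝ)) with hlamdef
    have hlam_mem : ∀ z ∈ T, lamR z = 1 := fun z hz => Finsupp.indicator_of_mem hz _
    have hsuppR : lamR.support = T := by
      ext z
      simp only [Finsupp.mem_support_iff]
      constructor
      · intro hz
        by_contra hzT
        exact hz (Finsupp.indicator_of_notMem hzT _)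
      · intro hz
        rw [hlam_mem z hz]
        exact one_ne_zero
    have hunits : ∀ z ∈ lamR.support, (inner ℝ z z : ℝ) = 1 := by
      rw [hsuppR]
      intro z hz
      obtain ⟨x, hx, rfl⟩ := Finset.mem_image.mp hz
      exact hunit x hx
    have hkerR := hker lamR hunits
    rw [hsuppR] at hkerR
    -- row sums
    have hptQ : ∀ x ∈ R, ∀ y ∈ R, Q (1 / 2 * (inner ℝ x y : ℝ)) =
        (if (inner ℝ x y : ℝ) = 2 then Q 1 else 0) + (if (inner ℝ x y : ℝ) = -2 then Q (-1) else 0)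
        + (if (inner ℝ x y : ℝ) = 1 then Q (1 / 2) else 0)
        + (if (inner ℝ x y : ℝ) = -1 then Q (-(1 / 2)) else 0)
        + (if (inner ℝ x y : ℝ) = 0 then Q 0 else 0) := by
      intro x hx y hy
      rcases hvals x hx y hy with h' | h' | h' | h' | h' <;> rw [h'] <;> norm_num
    have hrow : ∀ x ∈ R, (∑ y ∈ R, Q (1 / 2 * (inner ℝ x y : ℝ))) =
        Q 1 + Q (-1) + ((2 * h - 4 : ℕ) : ℝ) * Q (1 / 2)
        + ((2 * h - 4 : ℕ) : ℝ) * Q (-(1 / 2)) + ((n * h - 4 * h + 6 : ℕ) : ℝ) * Q 0 := by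
      intro x hx
      rw [Finset.sum_congr rfl (hptQ x hx)]
      rw [Finset.sum_add_distrib, Finset.sum_add_distrib, Finset.sum_add_distrib,
        Finset.sum_add_distrib, ← Finset.sum_filter, ← Finset.sum_filter, ← Finset.sum_filter,
        ← Finset.sum_filter, ← Finset.sum_filter, Finset.sum_const, Finset.sum_const,
        Finset.sum_const, Finset.sum_const, Finset.sum_const, hN2 x hx, hNm2 x hx, hN1 x hx,
        hNm1 x hx, hN0 x hx]
      simp only [nsmul_eq_mul]
      push_cast
      ring
    have hbr : Q 1 + Q (-1) + ((2 * h - 4 : ℕ) : ℝ) * Q (1 / 2)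
        + ((2 * h - 4 : ℕ) : ℝ) * Q (-(1 / 2)) + ((n * h - 4 * h + 6 : ℕ) : ℝ) * Q 0
        = 2 * Q 1 + (4 * (h : ℝ) - 8) * Q (1 / 2) + ((n : ℝ) * h - 4 * h + 6) * Q 0 := by
      have hhalf : ((2 * h - 4 : ℕ) : ℝ) * Q (-(1 / 2))
          = ((2 * h - 4 : ℕ) : ℝ) * Q (1 / 2) := by
        by_cases hz : (2 * h - 4 : ℕ) = 0
        · rw [hz]; norm_num
        · rw [hΔ hz]
      rw [hhalf, hQm1, hcast1, hcast0]
      ring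
    have hks : (∑ x ∈ T, ∑ y ∈ T, lamR x * lamR y * Q (inner ℝ x y))
        = ((n : ℝ) * h) * (2 * Q 1 + (4 * (h : ℝ) - 8) * Q (1 / 2)
            + ((n : ℝ) * h - 4 * h + 6) * Q 0) := by
      calc (∑ x ∈ T, ∑ y ∈ T, lamR x * lamR y * Q (inner ℝ x y))
          = ∑ x ∈ T, ∑ y ∈ T, Q (inner ℝ x y) := by
            refine Finset.sum_congr rfl fun z hz => Finset.sum_congr rfl fun w hw => ?_
            rw [hlam_mem z hz, hlam_mem w hw, one_mul, one_mul]
        _ = ∑ x ∈ R, ∑ y ∈ R, Q (inner ℝ (c • x) (c • y)) := by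
            rw [hTdef, Finset.sum_image hinj]
            exact Finset.sum_congr rfl fun x _ => Finset.sum_image hinj
        _ = ∑ x ∈ R, ∑ y ∈ R, Q (1 / 2 * (inner ℝ x y : ℝ)) := by
            refine Finset.sum_congr rfl fun x _ => Finset.sum_congr rfl fun y _ => ?_
            rw [hin]
        _ = ∑ x ∈ R, (Q 1 + Q (-1) + ((2 * h - 4 : ℕ) : ℝ) * Q (1 / 2)
              + ((2 * h - 4 : ℕ) : ℝ) * Q (-(1 / 2)) + ((n * h - 4 * h + 6 : ℕ) : ℝ) * Q 0) :=
            Finset.sum_congr rfl hrow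
        _ = R.card • (Q 1 + Q (-1) + ((2 * h - 4 : ℕ) : ℝ) * Q (1 / 2)
              + ((2 * h - 4 : ℕ) : ℝ) * Q (-(1 / 2)) + ((n * h - 4 * h + 6 : ℕ) : ℝ) * Q 0) :=
            Finset.sum_const _
        _ = ((n : ℝ) * h) * (2 * Q 1 + (4 * (h : ℝ) - 8) * Q (1 / 2)
              + ((n : ℝ) * h - 4 * h + 6) * Q 0) := by
            rw [hcard, nsmul_eq_mul, hbr]
            push_cast
            ring
    have hTsum : ∀ P : MvPolynomial (Fin n) ℝ, P.IsHomogeneous (2 * j) →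
        (∑ y ∈ T, lamR y * evalAt y P) = c ^ (2 * j) * ∑ x ∈ R, evalAt x P := by
      intro P hP
      calc (∑ y ∈ T, lamR y * evalAt y P) = ∑ y ∈ T, evalAt y P := by
            refine Finset.sum_congr rfl fun z hz => ?_
            rw [hlam_mem z hz, one_mul]
        _ = ∑ x ∈ R, evalAt (c • x) P := by rw [hTdef, Finset.sum_image hinj]
        _ = ∑ x ∈ R, c ^ (2 * j) * evalAt x P :=
            Finset.sum_congr rfl fun x _ => evalAt_smul hP c x
        _ = c ^ (2 * j) * ∑ x ∈ R, evalAt x P := (Finset.mul_sum _ _ _).symm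
    have hdesign : (∀ P : MvPolynomial (Fin n) ℝ, P.IsHomogeneous (2 * j) → IsHarmonic P →
        ∑ y ∈ T, lamR y * evalAt y P = 0) ↔
        (∀ P : MvPolynomial (Fin n) ℝ, P.IsHomogeneous (2 * j) → IsHarmonic P →
          ∑ x ∈ R, evalAt x P = 0) := by
      constructor
      · intro H P h1 h2
        have := H P h1 h2
        rw [hTsum P h1] at this
        exact (mul_eq_zero.mp this).resolve_left (pow_ne_zero _ hc0)
      · intro H P h1 h2
        rw [hTsum P h1, H P h1 h2, mul_zero]
    have hnh : ((n : ℝ) * h) ≠ 0 := by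
      have h1 : (0 : ℝ) < n := by exact_mod_cast hn
      have h2 : (0 : ℝ) < h := by exact_mod_cast hh
      positivity
    have h3 : (∑ x ∈ T, ∑ y ∈ T, lamR x * lamR y * Q (inner ℝ x y)) = 0 ↔
        2 * Q 1 + (4 * (h : ℝ) - 8) * Q (1 / 2) + ((n : ℝ) * h - 4 * h + 6) * Q 0 = 0 := by
      rw [hks]
      constructor
      · intro hq
        rcases mul_eq_zero.mp hq with h' | h'
        · exact absurd h' hnh
        · exact h'
      · intro hq
        rw [hq, mul_zero]
    exact hdesign.symm.trans (hkerR.symm.trans h3)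
  · -- Part 2
    rintro ⟨_hj2, hQ⟩
    have hkey : 2 * Q 1 + (4 * (h : ℝ) - 8) * Q (1 / 2) + ((n : ℝ) * h - 4 * h + 6) * Q 0
        = ((n : ℝ) * (n + 6) * (n + 4) / 96) * (((n : ℝ) - 10) * h + 6 * (n + 2)) := by
      rw [hQ 1, hQ (1 / 2), hQ 0]
      ring
    rw [hkey, mul_eq_zero]
    have hpos : ((n : ℝ) * (n + 6) * (n + 4) / 96) ≠ 0 := by
      have h1 : (0 : ℝ) < n := by exact_mod_cast hn
      positivity
    exact or_iff_right hpos

end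
end

section
/- A shell of norm m > 0 of ℤ³ is empty if and only if m is of the form 4ᵃ(8b+7) with a,b ≥ 0 (Legendre's three-square theorem restated via theta coefficients: the coefficient of q^m in θ₃(q)³ vanishes exactly for such m). -/
namespace ThreeSq
open Matrix

abbrev M3 := Matrix (Fin 3) (Fin 3) ℤ
abbrev M2 := Matrix (Fin 2) (Fin 2) ℤ

def Q3 (A : M3) (v : Fin 3 → ℤ) : ℤ := v ⬝ᵥ A.mulVec v
def Q2 (A : M2) (v : Fin 2 → ℤ) : ℤ := v ⬝ᵥ A.mulVec v

theorem Q3_expand (A : M3) (v : Fin 3 → ℤ) :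
    Q3 A v = A 0 0 * v 0 ^ 2 + A 1 1 * v 1 ^ 2 + A 2 2 * v 2 ^ 2
      + (A 0 1 + A 1 0) * (v 0 * v 1) + (A 0 2 + A 2 0) * (v 0 * v 2)
      + (A 1 2 + A 2 1) * (v 1 * v 2) := by
  simp [Q3, Matrix.mulVec, dotProduct, Fin.sum_univ_three]
  ring

theorem Q2_expand (A : M2) (v : Fin 2 → ℤ) :
    Q2 A v = A 0 0 * v 0 ^ 2 + A 1 1 * v 1 ^ 2 + (A 0 1 + A 1 0) * (v 0 * v 1) := by
  simp [Q2, Matrix.mulVec, dotProduct, Fin.sum_univ_two]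
  ring

theorem Q3_basechange (A P : M3) (v : Fin 3 → ℤ) :
    Q3 (Pᵀ * A * P) v = Q3 A (P.mulVec v) := by
  simp [Q3, Matrix.mulVec, dotProduct, Fin.sum_univ_three, Matrix.mul_apply,
    Matrix.transpose_apply]
  ring

theorem Q2_basechange (A P : M2) (v : Fin 2 → ℤ) :
    Q2 (Pᵀ * A * P) v = Q2 A (P.mulVec v) := by
  simp [Q2, Matrix.mulVec, dotProduct, Fin.sum_univ_two, Matrix.mul_apply,
    Matrix.transpose_apply]
  ring

theorem Q3_smul (A : M3) (g : ℤ) (v : Fin 3 → ℤ) : Q3 A (g • v) = g ^ 2 * Q3 A v := by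
  simp [Q3_expand]; ring

theorem Q2_smul (A : M2) (g : ℤ) (v : Fin 2 → ℤ) : Q2 A (g • v) = g ^ 2 * Q2 A v := by
  simp [Q2_expand]; ring

theorem ne3_iff (v : Fin 3 → ℤ) : v ≠ 0 ↔ ¬ (v 0 = 0 ∧ v 1 = 0 ∧ v 2 = 0) := by
  constructor
  · intro h h'; apply h; funext i; fin_cases i <;> simp [h'.1, h'.2.1, h'.2.2]
  · intro h h'; exact h ⟨by simp [h'], by simp [h'], by simp [h']⟩

theorem ne2_iff (v : Fin 2 → ℤ) : v ≠ 0 ↔ ¬ (v 0 = 0 ∧ v 1 = 0) := by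
  constructor
  · intro h h'; apply h; funext i; fin_cases i <;> simp [h'.1, h'.2]
  · intro h h'; exact h ⟨by simp [h'], by simp [h']⟩

theorem round_lemma (μ w : ℤ) (hμ : 0 < μ) : ∃ x : ℤ, 4 * (μ * x + w) ^ 2 ≤ μ ^ 2 := by
  set q := (-w) / μ with hq
  set r := (-w) % μ with hr
  have he : μ * q + r = -w := by
    rw [hq, hr]; exact (Int.mul_ediv_add_emod (-w) μ)
  have hr0 : 0 ≤ r := Int.emod_nonneg _ (ne_of_gt hμ)
  have hr1 : r < μ := Int.emod_lt_of_pos _ hμ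
  rcases le_or_gt (2 * r) μ with h | h
  · exact ⟨q, by nlinarith⟩
  · exact ⟨q + 1, by nlinarith⟩

/-- minimum of a positive integral ternary form -/
theorem min3 (A : M3) (hpos : ∀ v, v ≠ 0 → 0 < Q3 A v) :
    ∃ μ : ℤ, 1 ≤ μ ∧ (∃ v, v ≠ 0 ∧ Q3 A v = μ) ∧ ∀ v, v ≠ 0 → μ ≤ Q3 A v := by
  classical
  have hne : ∃ k : ℕ, ∃ v, v ≠ 0 ∧ Q3 A v = (k : ℤ) := by
    refine ⟨(Q3 A ![1,0,0]).toNat, ![1,0,0], ?_, ?_⟩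
    · rw [ne3_iff]; simp
    · rw [Int.toNat_of_nonneg]
      exact le_of_lt (hpos _ (by rw [ne3_iff]; simp))
  set μ := Nat.find hne with hμdef
  obtain ⟨v, hv, hvq⟩ := Nat.find_spec hne
  refine ⟨μ, ?_, ⟨v, hv, hvq⟩, ?_⟩
  · have := hpos v hv; omega
  · intro w hw
    by_contra hlt
    push_neg at hlt
    have h0 : 0 < Q3 A w := hpos w hw
    have : (Q3 A w).toNat < μ := by omega
    exact Nat.find_min hne this ⟨w, hw, by omega⟩

theorem min2 (A : M2) (hpos : ∀ v, v ≠ 0 → 0 < Q2 A v) :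
    ∃ μ : ℤ, 1 ≤ μ ∧ (∃ v, v ≠ 0 ∧ Q2 A v = μ) ∧ ∀ v, v ≠ 0 → μ ≤ Q2 A v := by
  classical
  have hne : ∃ k : ℕ, ∃ v, v ≠ 0 ∧ Q2 A v = (k : ℤ) := by
    refine ⟨(Q2 A ![1,0]).toNat, ![1,0], ?_, ?_⟩
    · rw [ne2_iff]; simp
    · rw [Int.toNat_of_nonneg]
      exact le_of_lt (hpos _ (by rw [ne2_iff]; simp))
  set μ := Nat.find hne with hμdef
  obtain ⟨v, hv, hvq⟩ := Nat.find_spec hne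
  refine ⟨μ, ?_, ⟨v, hv, hvq⟩, ?_⟩
  · have := hpos v hv; omega
  · intro w hw
    by_contra hlt
    push_neg at hlt
    have h0 : 0 < Q2 A w := hpos w hw
    have : (Q2 A w).toNat < μ := by omega
    exact Nat.find_min hne this ⟨w, hw, by omega⟩

theorem prim3 (A : M3) (μ : ℤ) (hμ : 1 ≤ μ) (v : Fin 3 → ℤ) (hv : v ≠ 0)
    (hval : Q3 A v = μ) (hmin : ∀ w, w ≠ 0 → μ ≤ Q3 A w) :
    Int.gcd (v 0) (Int.gcd (v 1) (v 2)) = 1 := by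
  set g : ℕ := Int.gcd (v 0) (Int.gcd (v 1) (v 2)) with hg
  have hd0 : (g : ℤ) ∣ v 0 := Int.gcd_dvd_left _ _
  have hd1 : (g : ℤ) ∣ v 1 := dvd_trans (Int.gcd_dvd_right _ _) (Int.gcd_dvd_left _ _)
  have hd2 : (g : ℤ) ∣ v 2 := dvd_trans (Int.gcd_dvd_right _ _) (Int.gcd_dvd_right _ _)
  have hgne : g ≠ 0 := by
    intro h0
    rw [h0] at hd0 hd1 hd2
    simp only [Nat.cast_zero, zero_dvd_iff] at hd0 hd1 hd2
    exact (ne3_iff v).mp hv ⟨hd0, hd1, hd2⟩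
  set w : Fin 3 → ℤ := fun i => v i / (g : ℤ) with hw
  have hvw : v = (g : ℤ) • w := by
    funext i
    have : (g : ℤ) ∣ v i := by fin_cases i <;> assumption
    simp [hw, Int.mul_ediv_cancel' this]
  have hwne : w ≠ 0 := by
    intro h0; apply hv; rw [hvw, h0]; simp
  have hQw : μ = (g:ℤ)^2 * Q3 A w := by rw [← hval, hvw, Q3_smul]
  have hminw := hmin w hwne
  have h1g : (1 : ℤ) ≤ (g : ℤ) := by exact_mod_cast Nat.one_le_iff_ne_zero.mpr hgne
  have hQpos : (0:ℤ) < Q3 A w := lt_of_lt_of_le (lt_of_lt_of_le zero_lt_one hμ) hminw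
  have hsq : (g : ℤ)^2 ≤ 1 := by nlinarith
  have hg1 : (g : ℤ) = 1 := by nlinarith
  exact_mod_cast hg1

theorem prim2 (A : M2) (μ : ℤ) (hμ : 1 ≤ μ) (v : Fin 2 → ℤ) (hv : v ≠ 0)
    (hval : Q2 A v = μ) (hmin : ∀ w, w ≠ 0 → μ ≤ Q2 A w) :
    Int.gcd (v 0) (v 1) = 1 := by
  set g : ℕ := Int.gcd (v 0) (v 1) with hg
  have hd0 : (g : ℤ) ∣ v 0 := Int.gcd_dvd_left _ _
  have hd1 : (g : ℤ) ∣ v 1 := Int.gcd_dvd_right _ _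
  have hgne : g ≠ 0 := by
    intro h0
    rw [h0] at hd0 hd1
    simp only [Nat.cast_zero, zero_dvd_iff] at hd0 hd1
    exact (ne2_iff v).mp hv ⟨hd0, hd1⟩
  set w : Fin 2 → ℤ := fun i => v i / (g : ℤ) with hw
  have hvw : v = (g : ℤ) • w := by
    funext i
    have : (g : ℤ) ∣ v i := by fin_cases i <;> assumption
    simp [hw, Int.mul_ediv_cancel' this]
  have hwne : w ≠ 0 := by
    intro h0; apply hv; rw [hvw, h0]; simp
  have hQw : μ = (g:ℤ)^2 * Q2 A w := by rw [← hval, hvw, Q2_smul]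
  have hminw := hmin w hwne
  have h1g : (1 : ℤ) ≤ (g : ℤ) := by exact_mod_cast Nat.one_le_iff_ne_zero.mpr hgne
  have hQpos : (0:ℤ) < Q2 A w := lt_of_lt_of_le (lt_of_lt_of_le zero_lt_one hμ) hminw
  have hsq : (g : ℤ)^2 ≤ 1 := by nlinarith
  have hg1 : (g : ℤ) = 1 := by nlinarith
  exact_mod_cast hg1

theorem extend2 (v : Fin 2 → ℤ) (hprim : Int.gcd (v 0) (v 1) = 1) :
    ∃ P : M2, P.det = 1 ∧ (∀ i, P i 0 = v i) := by
  have bez := Int.gcd_eq_gcd_ab (v 0) (v 1)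
  rw [hprim] at bez
  refine ⟨!![v 0, -(Int.gcdB (v 0) (v 1)); v 1, Int.gcdA (v 0) (v 1)], ?_, ?_⟩
  · rw [Matrix.det_fin_two]
    norm_num
    push_cast at bez
    linear_combination -bez
  · intro i; fin_cases i <;> first | rfl | simp

theorem extend3 (v : Fin 3 → ℤ) (hprim : Int.gcd (v 0) (Int.gcd (v 1) (v 2)) = 1) :
    ∃ P : M3, (P.det = 1 ∨ P.det = -1) ∧ (∀ i, P i 0 = v i) := by
  by_cases h12 : Int.gcd (v 0) (v 1) = 0
  · have h0 : v 0 = 0 := (Int.gcd_eq_zero_iff.mp h12).1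
    have h1 : v 1 = 0 := (Int.gcd_eq_zero_iff.mp h12).2
    have h2 : (v 2).natAbs = 1 := by
      rw [h0, h1] at hprim
      simpa [Int.gcd, Int.natAbs_abs] using hprim
    refine ⟨!![0,1,0; 0,0,1; v 2,0,0], ?_, ?_⟩
    · rcases Int.natAbs_eq_iff.mp h2 with h | h
      · left; simp [Matrix.det_fin_three, h]
      · right; simp [Matrix.det_fin_three, h]
    · intro i; fin_cases i <;> simp [h0, h1]
  · set g : ℕ := Int.gcd (v 0) (v 1) with hgdef
    have hgz : (g : ℤ) ≠ 0 := by exact_mod_cast h12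
    set a := Int.gcdA (v 0) (v 1) with ha
    set b := Int.gcdB (v 0) (v 1) with hb
    have bez1 : (g : ℤ) = v 0 * a + v 1 * b := Int.gcd_eq_gcd_ab (v 0) (v 1)
    have houter : Int.gcd ((g : ℕ) : ℤ) (v 2) = 1 := by
      rw [← hprim, hgdef]
      rw [Int.gcd_assoc]
    set s := Int.gcdA ((g : ℕ) : ℤ) (v 2) with hs
    set t := Int.gcdB ((g : ℕ) : ℤ) (v 2) with ht
    have bez2 : (1 : ℤ) = (g : ℤ) * s + v 2 * t := by
      have := Int.gcd_eq_gcd_ab ((g : ℕ) : ℤ) (v 2)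
      rw [houter] at this
      exact_mod_cast this
    set w0 := v 0 / (g : ℤ) with hw0def
    set w1 := v 1 / (g : ℤ) with hw1def
    have hw0 : v 0 = (g : ℤ) * w0 := (Int.mul_ediv_cancel' (Int.gcd_dvd_left _ _)).symm
    have hw1 : v 1 = (g : ℤ) * w1 := (Int.mul_ediv_cancel' (Int.gcd_dvd_right _ _)).symm
    have hawb : a * w0 + b * w1 = 1 := by
      have h : (g : ℤ) * (a * w0 + b * w1) = (g : ℤ) * 1 := by
        rw [hw0, hw1] at bez1
        linear_combination -bez1
      exact mul_left_cancel₀ hgz h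
    refine ⟨!![v 0, -b, -(t*w0); v 1, a, -(t*w1); v 2, 0, s], ?_, ?_⟩
    · left
      rw [Matrix.det_fin_three]
      simp
      rw [hw0, hw1]
      linear_combination ((g : ℤ) * s + v 2 * t) * hawb - bez2
    · intro i; fin_cases i <;> first | rfl | simp

theorem inv3 (P : M3) (h : P.det = 1 ∨ P.det = -1) :
    ∃ Pi : M3, P * Pi = 1 ∧ Pi * P = 1 := by
  refine ⟨P.det • P.adjugate, ?_, ?_⟩
  · rw [Matrix.mul_smul, Matrix.mul_adjugate, smul_smul]
    rcases h with h | h <;> rw [h] <;> norm_num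
  · rw [Matrix.smul_mul, Matrix.adjugate_mul, smul_smul]
    rcases h with h | h <;> rw [h] <;> norm_num

theorem inv2 (P : M2) (h : P.det = 1 ∨ P.det = -1) :
    ∃ Pi : M2, P * Pi = 1 ∧ Pi * P = 1 := by
  refine ⟨P.det • P.adjugate, ?_, ?_⟩
  · rw [Matrix.mul_smul, Matrix.mul_adjugate, smul_smul]
    rcases h with h | h <;> rw [h] <;> norm_num
  · rw [Matrix.smul_mul, Matrix.adjugate_mul, smul_smul]
    rcases h with h | h <;> rw [h] <;> norm_num

theorem mulVec_ne3 (P Pi : M3) (hPi : Pi * P = 1) (x : Fin 3 → ℤ) (hx : x ≠ 0) :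
    P.mulVec x ≠ 0 := by
  intro h0
  apply hx
  have : Pi.mulVec (P.mulVec x) = x := by
    rw [Matrix.mulVec_mulVec, hPi, Matrix.one_mulVec]
  rw [h0] at this
  rw [← this, Matrix.mulVec_zero]

theorem mulVec_ne2 (P Pi : M2) (hPi : Pi * P = 1) (x : Fin 2 → ℤ) (hx : x ≠ 0) :
    P.mulVec x ≠ 0 := by
  intro h0
  apply hx
  have : Pi.mulVec (P.mulVec x) = x := by
    rw [Matrix.mulVec_mulVec, hPi, Matrix.one_mulVec]
  rw [h0] at this
  rw [← this, Matrix.mulVec_zero]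

theorem col0_3 (P : M3) (v : Fin 3 → ℤ) (hcol : ∀ i, P i 0 = v i) :
    P.mulVec ![1,0,0] = v := by
  funext i
  simp [Matrix.mulVec, dotProduct, Fin.sum_univ_three, hcol i]

theorem col0_2 (P : M2) (v : Fin 2 → ℤ) (hcol : ∀ i, P i 0 = v i) :
    P.mulVec ![1,0] = v := by
  funext i
  simp [Matrix.mulVec, dotProduct, Fin.sum_univ_two, hcol i]

theorem det_basechange3 (A P : M3) (h : P.det = 1 ∨ P.det = -1) :
    (Pᵀ * A * P).det = A.det := by
  rw [Matrix.det_mul, Matrix.det_mul, Matrix.det_transpose]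
  rcases h with h | h <;> rw [h] <;> ring

theorem det_basechange2 (A P : M2) (h : P.det = 1 ∨ P.det = -1) :
    (Pᵀ * A * P).det = A.det := by
  rw [Matrix.det_mul, Matrix.det_mul, Matrix.det_transpose]
  rcases h with h | h <;> rw [h] <;> ring

@[simp] theorem v3_0 (x y z : ℤ) : (![x,y,z] : Fin 3 → ℤ) 0 = x := rfl
@[simp] theorem v3_1 (x y z : ℤ) : (![x,y,z] : Fin 3 → ℤ) 1 = y := rfl
@[simp] theorem v3_2 (x y z : ℤ) : (![x,y,z] : Fin 3 → ℤ) 2 = z := rfl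
@[simp] theorem v2_0 (x y : ℤ) : (![x,y] : Fin 2 → ℤ) 0 = x := rfl
@[simp] theorem v2_1 (x y : ℤ) : (![x,y] : Fin 2 → ℤ) 1 = y := rfl

theorem eta3 (u : Fin 3 → ℤ) : ![u 0, u 1, u 2] = u := by
  funext i; fin_cases i <;> rfl

theorem eta2 (u : Fin 2 → ℤ) : ![u 0, u 1] = u := by
  funext i; fin_cases i <;> rfl

theorem symm_entry2 (B : M2) (hsym : Bᵀ = B) : B 1 0 = B 0 1 := by
  have := congrFun (congrFun hsym 0) 1
  rwa [Matrix.transpose_apply] at this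

theorem symm_basechange2 (A P : M2) (hsym : Aᵀ = A) : (Pᵀ * A * P)ᵀ = Pᵀ * A * P := by
  rw [Matrix.transpose_mul, Matrix.transpose_mul, Matrix.transpose_transpose, hsym,
    Matrix.mul_assoc]

theorem symm_basechange3 (A P : M3) (hsym : Aᵀ = A) : (Pᵀ * A * P)ᵀ = Pᵀ * A * P := by
  rw [Matrix.transpose_mul, Matrix.transpose_mul, Matrix.transpose_transpose, hsym,
    Matrix.mul_assoc]

theorem bmin (G : M2) (hsym : Gᵀ = G) (hpos : ∀ u, u ≠ 0 → 0 < Q2 G u) :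
    ∃ ν : ℤ, 1 ≤ ν ∧ (∃ u, u ≠ 0 ∧ Q2 G u = ν) ∧ (∀ u, u ≠ 0 → ν ≤ Q2 G u) ∧
      3 * ν ^ 2 ≤ 4 * G.det := by
  obtain ⟨ν, hν1, ⟨u, hu, huv⟩, hmin⟩ := min2 G hpos
  refine ⟨ν, hν1, ⟨u, hu, huv⟩, hmin, ?_⟩
  obtain ⟨P, hdet1, hcol⟩ := extend2 u (prim2 G ν hν1 u hu huv hmin)
  obtain ⟨Pi, hPPi, hPiP⟩ := inv2 P (Or.inl hdet1)
  set B := Pᵀ * G * P with hBdef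
  have hQB : ∀ x, Q2 B x = Q2 G (P.mulVec x) := fun x => Q2_basechange G P x
  have hBmin : ∀ x, x ≠ 0 → ν ≤ Q2 B x := by
    intro x hx
    rw [hQB]; exact hmin _ (mulVec_ne2 P Pi hPiP x hx)
  have hB00 : B 0 0 = ν := by
    have h1 : Q2 B ![1,0] = B 0 0 := by rw [Q2_expand]; simp
    rw [hQB, col0_2 P u hcol, huv] at h1
    exact h1.symm
  have hb10 : B 1 0 = B 0 1 := symm_entry2 B (symm_basechange2 G P hsym)
  have hdetB : B.det = G.det := det_basechange2 G P (Or.inl hdet1)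
  have idB : ∀ x y : ℤ, ν * Q2 B ![x,y] = (ν*x + B 0 1*y)^2 + B.det * y^2 := by
    intro x y
    rw [Q2_expand, Matrix.det_fin_two]
    simp only [v2_0, v2_1]
    rw [hb10, hB00]
    ring
  obtain ⟨x, hx⟩ := round_lemma ν (B 0 1) (by omega)
  have hne : (![x, 1] : Fin 2 → ℤ) ≠ 0 := by rw [ne2_iff]; simp
  have h1 := hBmin _ hne
  have h2 := idB x 1
  rw [hdetB] at h2
  nlinarith

theorem bin (G : M2) (hsym : Gᵀ = G) (hpos : ∀ u, u ≠ 0 → 0 < Q2 G u) (δ : ℤ)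
    (hδ1 : 1 ≤ δ) (hδ2 : δ ≤ 2) (hdet : G.det = δ) (k : ℤ) (hk : ∃ u, Q2 G u = k) :
    ∃ y z : ℤ, y ^ 2 + δ * z ^ 2 = k := by
  obtain ⟨ν, hν1, ⟨u, hu, huv⟩, hmin, hineq⟩ := bmin G hsym hpos
  rw [hdet] at hineq
  have hν : ν = 1 := by nlinarith
  rw [hν] at huv hmin
  obtain ⟨P, hdet1, hcol⟩ := extend2 u (prim2 G 1 le_rfl u hu huv hmin)
  obtain ⟨Pi, hPPi, hPiP⟩ := inv2 P (Or.inl hdet1)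
  set B := Pᵀ * G * P with hBdef
  have hQB : ∀ x, Q2 B x = Q2 G (P.mulVec x) := fun x => Q2_basechange G P x
  have hB00 : B 0 0 = 1 := by
    have h1 : Q2 B ![1,0] = B 0 0 := by rw [Q2_expand]; simp
    rw [hQB, col0_2 P u hcol, huv] at h1
    exact h1.symm
  have hb10 : B 1 0 = B 0 1 := symm_entry2 B (symm_basechange2 G P hsym)
  have hdetB : B.det = δ := by rw [hBdef, det_basechange2 G P (Or.inl hdet1), hdet]
  have idB : ∀ x y : ℤ, Q2 B ![x,y] = (x + B 0 1*y)^2 + δ * y^2 := by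
    intro x y
    have hd := Matrix.det_fin_two B
    rw [hdetB, hb10, hB00] at hd
    rw [Q2_expand]
    simp only [v2_0, v2_1]
    rw [hb10, hB00]
    linear_combination -(y^2) * hd
  obtain ⟨w, hw⟩ := hk
  have hkey : Q2 B (Pi.mulVec w) = k := by
    rw [hQB, Matrix.mulVec_mulVec, hPPi, Matrix.one_mulVec, hw]
  set t := Pi.mulVec w with ht
  have : Q2 B ![t 0, t 1] = k := by rw [eta2]; exact hkey
  rw [idB] at this
  exact ⟨t 0 + B 0 1 * t 1, t 1, this⟩

theorem mu_one (μ ν δ : ℤ) (hμ1 : 1 ≤ μ) (hν1 : 1 ≤ ν) (hδ2 : δ ≤ 2)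
    (h1 : 3*μ^2 ≤ 4*ν) (h2 : 3*ν^2 ≤ 4*(μ*δ)) : μ = 1 := by
  by_contra hne
  have hμ2 : 2 ≤ μ := by
    rcases lt_or_ge μ 2 with h | h
    · omega
    · exact h
  have h8 : 8 ≤ μ^3 := by
    nlinarith [mul_nonneg (by linarith : (0:ℤ) ≤ μ - 2)
      (by nlinarith [sq_nonneg (μ+1)] : (0:ℤ) ≤ μ^2 + 2*μ + 4)]
  have e1 : 9*μ^4 ≤ 16*ν^2 := by
    nlinarith [mul_nonneg (by linarith : (0:ℤ) ≤ 4*ν - 3*μ^2)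
      (by nlinarith [sq_nonneg μ] : (0:ℤ) ≤ 4*ν + 3*μ^2)]
  have e2 : 48*ν^2 ≤ 128*μ := by
    nlinarith [mul_nonneg (by linarith : (0:ℤ) ≤ μ) (by linarith : (0:ℤ) ≤ 2 - δ)]
  nlinarith [mul_le_mul_of_nonneg_left h8 (by linarith : (0:ℤ) ≤ μ)]

theorem ter (A : M3) (hsym : Aᵀ = A) (hpos : ∀ v, v ≠ 0 → 0 < Q3 A v) (δ : ℤ)
    (hδ1 : 1 ≤ δ) (hδ2 : δ ≤ 2) (hdet : A.det = δ) (k : ℤ) (hk : ∃ v, Q3 A v = k) :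
    ∃ x y z : ℤ, x ^ 2 + y ^ 2 + δ * z ^ 2 = k := by
  obtain ⟨μ, hμ1, ⟨v, hv, hvμ⟩, hmin⟩ := min3 A hpos
  obtain ⟨P, hdP, hcol⟩ := extend3 v (prim3 A μ hμ1 v hv hvμ hmin)
  obtain ⟨Pi, hPPi, hPiP⟩ := inv3 P hdP
  set B := Pᵀ * A * P with hBdef
  have hQB : ∀ x, Q3 B x = Q3 A (P.mulVec x) := fun x => Q3_basechange A P x
  have hBmin : ∀ x, x ≠ 0 → μ ≤ Q3 B x := by
    intro x hx
    rw [hQB]; exact hmin _ (mulVec_ne3 P Pi hPiP x hx)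
  have hB00 : B 0 0 = μ := by
    have h1 : Q3 B ![1,0,0] = B 0 0 := by rw [Q3_expand]; simp
    rw [hQB, col0_3 P v hcol, hvμ] at h1
    exact h1.symm
  have hsymB : Bᵀ = B := symm_basechange3 A P hsym
  have hb10 : B 1 0 = B 0 1 := by
    have := congrFun (congrFun hsymB 0) 1
    rwa [Matrix.transpose_apply] at this
  have hb20 : B 2 0 = B 0 2 := by
    have := congrFun (congrFun hsymB 0) 2
    rwa [Matrix.transpose_apply] at this
  have hb21 : B 2 1 = B 1 2 := by
    have := congrFun (congrFun hsymB 1) 2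
    rwa [Matrix.transpose_apply] at this
  have hdetB : B.det = δ := by rw [hBdef, det_basechange3 A P hdP, hdet]
  set gm : M2 := !![μ*B 1 1 - (B 0 1)^2, μ*B 1 2 - B 0 1*B 0 2;
                    μ*B 1 2 - B 0 1*B 0 2, μ*B 2 2 - (B 0 2)^2] with hgm
  have hgm00 : gm 0 0 = μ*B 1 1 - (B 0 1)^2 := by rw [hgm]; simp
  have hgm01 : gm 0 1 = μ*B 1 2 - B 0 1*B 0 2 := by rw [hgm]; simp
  have hgm10 : gm 1 0 = μ*B 1 2 - B 0 1*B 0 2 := by rw [hgm]; simp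
  have hgm11 : gm 1 1 = μ*B 2 2 - (B 0 2)^2 := by rw [hgm]; simp
  have hsymgm : gmᵀ = gm := by
    funext i j
    rw [Matrix.transpose_apply]
    fin_cases i <;> fin_cases j <;> rfl
  have idT : ∀ x y z : ℤ, μ * Q3 B ![x,y,z] =
      (μ*x + B 0 1*y + B 0 2*z)^2 + Q2 gm ![y,z] := by
    intro x y z
    rw [Q3_expand, Q2_expand]
    simp only [v3_0, v3_1, v3_2, v2_0, v2_1, hgm00, hgm01, hgm10, hgm11]
    rw [hb10, hb20, hb21, hB00]
    ring
  have hdetgm : gm.det = μ * δ := by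
    have hd3 := Matrix.det_fin_three B
    rw [hdetB, hb10, hb20, hb21, hB00] at hd3
    rw [Matrix.det_fin_two]
    rw [hgm00, hgm01, hgm10, hgm11]
    linear_combination -μ * hd3
  have hstrong : ∀ y z : ℤ, (![y, z] : Fin 2 → ℤ) ≠ 0 → 3*μ^2 ≤ 4 * Q2 gm ![y,z] := by
    intro y z hyz
    obtain ⟨x, hx⟩ := round_lemma μ (B 0 1 * y + B 0 2 * z) (by omega)
    have hne : (![x, y, z] : Fin 3 → ℤ) ≠ 0 := by
      rw [ne3_iff]
      rw [ne2_iff] at hyz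
      simp only [v3_0, v3_1, v3_2]
      simp only [v2_0, v2_1] at hyz
      tauto
    have h1 := hBmin _ hne
    have h2 := idT x y z
    nlinarith
  have hgmpos : ∀ u, u ≠ 0 → 0 < Q2 gm u := by
    intro u hu
    have := hstrong (u 0) (u 1) (by rw [eta2]; exact hu)
    rw [eta2] at this
    nlinarith
  obtain ⟨ν, hν1, ⟨u₀, hu₀, hu₀v⟩, hminν, hineqν⟩ := bmin gm hsymgm hgmpos
  rw [hdetgm] at hineqν
  have hsν := hstrong (u₀ 0) (u₀ 1) (by rw [eta2]; exact hu₀)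
  rw [eta2, hu₀v] at hsν
  have hμeq : μ = 1 := mu_one μ ν δ hμ1 hν1 hδ2 hsν hineqν
  -- now B 0 0 = 1
  rw [hμeq] at hB00 idT hdetgm
  obtain ⟨w, hw⟩ := hk
  have hkey : Q3 B (Pi.mulVec w) = k := by
    rw [hQB, Matrix.mulVec_mulVec, hPPi, Matrix.one_mulVec, hw]
  set t := Pi.mulVec w with ht
  have hQt : Q3 B ![t 0, t 1, t 2] = k := by rw [eta3]; exact hkey
  have hid := idT (t 0) (t 1) (t 2)
  rw [one_mul, hQt] at hid
  have hk2 : ∃ u, Q2 gm u = k - (1 * t 0 + B 0 1 * t 1 + B 0 2 * t 2)^2 :=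
    ⟨![t 1, t 2], by omega⟩
  obtain ⟨y', z', hyz'⟩ := bin gm hsymgm hgmpos δ hδ1 hδ2 (by rw [hdetgm, one_mul]) _ hk2
  exact ⟨1 * t 0 + B 0 1 * t 1 + B 0 2 * t 2, y', z', by omega⟩

@[simp] theorem m3_00 (a b c d e f g h i : ℤ) : (!![a,b,c;d,e,f;g,h,i]) 0 0 = a := rfl
@[simp] theorem m3_01 (a b c d e f g h i : ℤ) : (!![a,b,c;d,e,f;g,h,i]) 0 1 = b := rfl
@[simp] theorem m3_02 (a b c d e f g h i : ℤ) : (!![a,b,c;d,e,f;g,h,i]) 0 2 = c := rfl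
@[simp] theorem m3_10 (a b c d e f g h i : ℤ) : (!![a,b,c;d,e,f;g,h,i]) 1 0 = d := rfl
@[simp] theorem m3_11 (a b c d e f g h i : ℤ) : (!![a,b,c;d,e,f;g,h,i]) 1 1 = e := rfl
@[simp] theorem m3_12 (a b c d e f g h i : ℤ) : (!![a,b,c;d,e,f;g,h,i]) 1 2 = f := rfl
@[simp] theorem m3_20 (a b c d e f g h i : ℤ) : (!![a,b,c;d,e,f;g,h,i]) 2 0 = g := rfl
@[simp] theorem m3_21 (a b c d e f g h i : ℤ) : (!![a,b,c;d,e,f;g,h,i]) 2 1 = h := rfl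
@[simp] theorem m3_22 (a b c d e f g h i : ℤ) : (!![a,b,c;d,e,f;g,h,i]) 2 2 = i := rfl

theorem rep_of_data (n q b c h D δ : ℤ) (hn : 0 < n) (hq : 0 < q) (hD : 0 < D)
    (hδ1 : 1 ≤ δ) (hδ2 : δ ≤ 2)
    (hqc : q * c - b ^ 2 = D) (hdet : δ * n * D - q * h ^ 2 = δ) :
    ∃ x y z : ℤ, x ^ 2 + y ^ 2 + δ * z ^ 2 = δ * n := by
  have hqδ : 0 < q * δ := by nlinarith
  set A : M3 := !![q, b, 0; b, c, h; 0, h, δ * n] with hA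
  have hsym : Aᵀ = A := by
    funext i j
    rw [Matrix.transpose_apply]
    fin_cases i <;> fin_cases j <;> rfl
  have hexp : ∀ v : Fin 3 → ℤ, Q3 A v = q * v 0^2 + c * v 1^2 + (δ*n) * v 2^2
      + (2*b)*(v 0 * v 1) + (2*h)*(v 1 * v 2) := by
    intro v
    rw [Q3_expand, hA]
    simp only [m3_00, m3_01, m3_02, m3_10, m3_11, m3_12, m3_20, m3_21, m3_22]
    ring
  have hId : ∀ v : Fin 3 → ℤ, q * D * Q3 A v =
      D * (q * v 0 + b * v 1)^2 + (D * v 1 + q * h * v 2)^2 + (q * δ) * (v 2)^2 := by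
    intro v
    rw [hexp]
    linear_combination (D * (v 1)^2) * hqc + (q * (v 2)^2) * hdet
  have hpos : ∀ v, v ≠ 0 → 0 < Q3 A v := by
    intro v hv
    rcases lt_or_ge 0 (Q3 A v) with hlt | hle
    · exact hlt
    exfalso
    have hid := hId v
    have hQ : q * D * Q3 A v ≤ 0 :=
      mul_nonpos_of_nonneg_of_nonpos (le_of_lt (mul_pos hq hD)) hle
    have s1 : 0 ≤ D * (q * v 0 + b * v 1)^2 := mul_nonneg hD.le (sq_nonneg _)
    have s2 : 0 ≤ (D * v 1 + q * h * v 2)^2 := sq_nonneg _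
    have s3 : 0 ≤ (q * δ) * (v 2)^2 := mul_nonneg hqδ.le (sq_nonneg _)
    have hv2 : v 2 = 0 := by
      have h1 : (q * δ) * (v 2)^2 ≤ (q * δ) * 0 := by rw [mul_zero]; linarith
      have h2 : (v 2)^2 ≤ 0 := le_of_mul_le_mul_left h1 hqδ
      exact sq_eq_zero_iff.mp (le_antisymm h2 (sq_nonneg _))
    have hv1 : v 1 = 0 := by
      have h1 : (D * v 1 + q * h * v 2)^2 ≤ 0 := by linarith
      have h2 : D * v 1 + q * h * v 2 = 0 := sq_eq_zero_iff.mp (le_antisymm h1 (sq_nonneg _))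
      rw [hv2, mul_zero, add_zero] at h2
      rcases mul_eq_zero.mp h2 with h | h
      · exact absurd h (ne_of_gt hD)
      · exact h
    have hv0 : v 0 = 0 := by
      have h1 : D * (q * v 0 + b * v 1)^2 ≤ D * 0 := by rw [mul_zero]; linarith
      have h2 : (q * v 0 + b * v 1)^2 ≤ 0 := le_of_mul_le_mul_left h1 hD
      have h3 : q * v 0 + b * v 1 = 0 := sq_eq_zero_iff.mp (le_antisymm h2 (sq_nonneg _))
      rw [hv1, mul_zero, add_zero] at h3
      rcases mul_eq_zero.mp h3 with h | h
      · exact absurd h (ne_of_gt hq)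
      · exact h
    exact (ne3_iff v).mp hv ⟨hv0, hv1, hv2⟩
  have hdetA : A.det = δ := by
    rw [hA, Matrix.det_fin_three]
    simp only [m3_00, m3_01, m3_02, m3_10, m3_11, m3_12, m3_20, m3_21, m3_22]
    linear_combination (δ*n) * hqc + hdet
  have hval : Q3 A ![0,0,1] = δ * n := by
    rw [hexp]
    simp only [v3_0, v3_1, v3_2]
    ring
  exact ter A hsym hpos δ hδ1 hδ2 hdetA (δ * n) ⟨![0,0,1], hval⟩

theorem conv2 (n x y z : ℤ) (hrep : x^2 + y^2 + 2*z^2 = 2*n) :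
    ∃ a b c : ℤ, a^2 + b^2 + c^2 = n := by
  rcases Int.even_or_odd x with ⟨a, ha⟩ | ⟨a, ha⟩ <;>
    rcases Int.even_or_odd y with ⟨b, hb⟩ | ⟨b, hb⟩
  · refine ⟨a + b, a - b, z, ?_⟩
    have h2 : 2*((a+b)^2 + (a-b)^2 + z^2) = 2*n := by
      rw [ha, hb] at hrep; linear_combination hrep
    linarith
  · exfalso
    have : (2:ℤ) ∣ 1 := ⟨n - 2*a^2 - 2*b^2 - 2*b - z^2, by rw [ha, hb] at hrep; linarith⟩
    norm_num at this
  · exfalso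
    have : (2:ℤ) ∣ 1 := ⟨n - 2*b^2 - 2*a^2 - 2*a - z^2, by rw [ha, hb] at hrep; linarith⟩
    norm_num at this
  · refine ⟨a + b + 1, a - b, z, ?_⟩
    have h2 : 2*((a+b+1)^2 + (a-b)^2 + z^2) = 2*n := by
      rw [ha, hb] at hrep; linear_combination hrep
    linarith

theorem no_rep_aux : ∀ (a : ℕ) (m x y z : ℤ), m % 8 = 7 → x^2 + y^2 + z^2 ≠ 4^a * m := by
  intro a
  induction a with
  | zero =>
    intro m x y z hm heq
    rw [pow_zero, one_mul] at heq
    have hmm : m = 8 * (m / 8) + 7 := by omega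
    have h8 : ((x:ZMod 8))^2 + (y:ZMod 8)^2 + (z:ZMod 8)^2 = 7 := by
      have hc := congrArg (Int.cast : ℤ → ZMod 8) heq
      push_cast at hc
      rw [hc, hmm]
      push_cast
      rw [show (8 : ZMod 8) = 0 by decide]
      ring
    have : ∀ u v w : ZMod 8, u^2 + v^2 + w^2 ≠ 7 := by decide
    exact this _ _ _ h8
  | succ a ih =>
    intro m x y z hm heq
    have h40 : (((4:ℤ)^(a+1) * m : ℤ) : ZMod 4) = 0 := by
      push_cast
      rw [show (4 : ZMod 4) = 0 by decide, zero_pow (Nat.succ_ne_zero a), zero_mul]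
    have hc : ((x:ZMod 4))^2 + (y:ZMod 4)^2 + (z:ZMod 4)^2 = 0 := by
      have hcc := congrArg (Int.cast : ℤ → ZMod 4) heq
      push_cast at hcc h40 ⊢
      rw [hcc]
      exact h40
    have hkey : ∀ u v w : ZMod 4, u^2 + v^2 + w^2 = 0 → u^2 = 0 ∧ v^2 = 0 ∧ w^2 = 0 := by
      decide
    obtain ⟨h1, h2, h3⟩ := hkey _ _ _ hc
    have hdvd : ∀ t : ℤ, ((t : ZMod 4))^2 = 0 → (2:ℤ) ∣ t := by
      intro t ht
      have h4d : (4:ℤ) ∣ t^2 := by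
        have : ((t^2 : ℤ) : ZMod 4) = 0 := by push_cast; exact ht
        exact_mod_cast (ZMod.intCast_zmod_eq_zero_iff_dvd _ 4).mp this
      have h2d : (2:ℤ) ∣ t * t := by
        rw [← sq]
        exact dvd_trans (by norm_num) h4d
      have := (Int.Prime.dvd_mul' Nat.prime_two h2d).elim id id
      exact_mod_cast this
    obtain ⟨x', hx'⟩ := hdvd x h1
    obtain ⟨y', hy'⟩ := hdvd y h2
    obtain ⟨z', hz'⟩ := hdvd z h3
    apply ih m x' y' z' hm
    have h4 : (4:ℤ) * (x'^2 + y'^2 + z'^2) = 4 * (4^a * m) := by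
      rw [hx', hy', hz'] at heq
      linear_combination heq
    linarith

theorem nmod (n : ℕ) (q : ℕ) (a : ℕ) (hn : 1 ≤ n) (ha : a ≤ n)
    (hqn : q ≡ n - a [MOD n]) : (q : ℤ) % (n : ℤ) = (-(a:ℤ)) % (n : ℤ) := by
  have h1 : (q : ℤ) % (n : ℤ) = ((n - a : ℕ) : ℤ) % (n : ℤ) := by
    have := hqn
    unfold Nat.ModEq at this
    have h2 : ((q % n : ℕ) : ℤ) = (((n - a) % n : ℕ) : ℤ) := by exact_mod_cast this
    push_cast at h2
    exact h2
  rw [h1]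
  have h3 : ((n - a : ℕ) : ℤ) = (n : ℤ) - a := by
    push_cast [ha]
    ring
  rw [h3]
  have h4 : (((n:ℤ) - a) - n) % (n:ℤ) = ((n:ℤ) - a) % (n:ℤ) := by
    rw [Int.sub_emod ((n:ℤ) - a) n n, Int.emod_self, sub_zero, Int.emod_emod_of_dvd _ dvd_rfl]
  rw [show (-(a:ℤ)) = ((n:ℤ) - a) - n by ring]
  exact h4.symm

theorem jac_odd (n q : ℕ) (hn3 : 3 ≤ n) (hnodd : n % 8 = 1 ∨ n % 8 = 5)
    (hq4 : q % 4 = 1) (hqn : q ≡ n - 1 [MOD n]) :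
    jacobiSym (-(n:ℤ)) q = 1 := by
  have hqodd : Odd q := by rw [Nat.odd_iff]; omega
  have hnodd' : Odd n := by rw [Nat.odd_iff]; omega
  have h1 : jacobiSym (-(n:ℤ)) q = jacobiSym (-1) q * jacobiSym (n:ℤ) q := by
    rw [← jacobiSym.mul_left]; norm_num
  have h2 : jacobiSym (-1 : ℤ) q = 1 := by
    rw [jacobiSym.at_neg_one hqodd, ZMod.χ₄_nat_one_mod_four hq4]
  have h3 : jacobiSym (n:ℤ) q = jacobiSym (q:ℤ) n :=
    (jacobiSym.quadratic_reciprocity_one_mod_four hq4 hnodd').symm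
  have h4 : jacobiSym (q:ℤ) n = jacobiSym (-1 : ℤ) n :=
    jacobiSym.mod_left' (by exact_mod_cast nmod n q 1 (by omega) (by omega) hqn)
  have h5 : jacobiSym (-1:ℤ) n = 1 := by
    rw [jacobiSym.at_neg_one hnodd', ZMod.χ₄_nat_one_mod_four (by omega)]
  rw [h1, h2, h3, h4, h5]; norm_num

theorem jac_three (n q : ℕ) (hn3 : 3 ≤ n) (hn8 : n % 8 = 3)
    (hq4 : q % 4 = 1) (hqn : q ≡ n - 2 [MOD n]) :
    jacobiSym (-(n:ℤ)) q = 1 := by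
  have hqodd : Odd q := by rw [Nat.odd_iff]; omega
  have hnodd' : Odd n := by rw [Nat.odd_iff]; omega
  have h1 : jacobiSym (-(n:ℤ)) q = jacobiSym (-1) q * jacobiSym (n:ℤ) q := by
    rw [← jacobiSym.mul_left]; norm_num
  have h2 : jacobiSym (-1 : ℤ) q = 1 := by
    rw [jacobiSym.at_neg_one hqodd, ZMod.χ₄_nat_one_mod_four hq4]
  have h3 : jacobiSym (n:ℤ) q = jacobiSym (q:ℤ) n :=
    (jacobiSym.quadratic_reciprocity_one_mod_four hq4 hnodd').symm
  have h4 : jacobiSym (q:ℤ) n = jacobiSym (-2 : ℤ) n :=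
    jacobiSym.mod_left' (by exact_mod_cast nmod n q 2 (by omega) (by omega) hqn)
  have h5 : jacobiSym (-2:ℤ) n = 1 := by
    rw [show (-2 : ℤ) = -1 * 2 by norm_num, jacobiSym.mul_left,
      jacobiSym.at_neg_one hnodd', jacobiSym.at_two hnodd',
      ZMod.χ₄_nat_three_mod_four (by omega), ZMod.χ₈_nat_eq_if_mod_eight]
    rw [if_neg (by omega), if_neg (by omega)]
    norm_num
  rw [h1, h2, h3, h4, h5]; norm_num

theorem jac_even (n' q : ℕ) (hn1 : 1 ≤ n') (hodd : n' % 2 = 1)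
    (hcase : (q % 8 = 1 ∧ n' % 4 = 1) ∨ (q % 8 = 5 ∧ n' % 4 = 3))
    (hqn : q ≡ n' - 1 [MOD n']) :
    jacobiSym (-(2*(n':ℤ))) q = 1 := by
  have hq4 : q % 4 = 1 := by omega
  have hqodd : Odd q := by rw [Nat.odd_iff]; omega
  have hnodd' : Odd n' := by rw [Nat.odd_iff]; omega
  have h1 : jacobiSym (-(2*(n':ℤ))) q
      = jacobiSym (-1) q * (jacobiSym (2:ℤ) q * jacobiSym (n':ℤ) q) := by
    rw [← jacobiSym.mul_left, ← jacobiSym.mul_left]; norm_num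
  have h2 : jacobiSym (-1 : ℤ) q = 1 := by
    rw [jacobiSym.at_neg_one hqodd, ZMod.χ₄_nat_one_mod_four hq4]
  have h3 : jacobiSym (n':ℤ) q = jacobiSym (q:ℤ) n' :=
    (jacobiSym.quadratic_reciprocity_one_mod_four hq4 hnodd').symm
  have h4 : jacobiSym (q:ℤ) n' = jacobiSym (-1 : ℤ) n' :=
    jacobiSym.mod_left' (by exact_mod_cast nmod n' q 1 (by omega) (by omega) hqn)
  have h6 : jacobiSym (2:ℤ) q = ZMod.χ₈ q := jacobiSym.at_two hqodd
  have h7 : jacobiSym (-1:ℤ) n' = ZMod.χ₄ n' := jacobiSym.at_neg_one hnodd'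
  rcases hcase with ⟨hq8, hn4⟩ | ⟨hq8, hn4⟩
  · rw [h1, h2, h3, h4, h6, h7, ZMod.χ₄_nat_one_mod_four hn4,
      ZMod.χ₈_nat_eq_if_mod_eight, if_neg (by omega), if_pos (by omega)]
    norm_num
  · rw [h1, h2, h3, h4, h6, h7, ZMod.χ₄_nat_three_mod_four hn4,
      ZMod.χ₈_nat_eq_if_mod_eight, if_neg (by omega), if_neg (by omega)]
    norm_num

theorem rep_delta1 (n q : ℕ) (hn : 0 < n) (hq : q.Prime) (hqgt : n < q)
    (hdvd : (n:ℤ) ∣ (q:ℤ) + 1) (hsq : IsSquare (-((n:ℕ) : ZMod q))) :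
    ∃ x y z : ℤ, x^2 + y^2 + z^2 = (n:ℤ) := by
  haveI : Fact q.Prime := ⟨hq⟩
  have hq0 : 0 < (q:ℤ) := by exact_mod_cast hq.pos
  have hn0 : 0 < (n:ℤ) := by exact_mod_cast hn
  set D : ℤ := ((q:ℤ) + 1) / n with hDdef
  have hD : (n:ℤ) * D = (q:ℤ) + 1 := Int.mul_ediv_cancel' hdvd
  have hDpos : 0 < D := by nlinarith
  obtain ⟨s, hs⟩ := hsq
  have hnD1 : ((n:ℕ) : ZMod q) * ((D : ℤ) : ZMod q) = 1 := by
    have hc := congrArg (Int.cast : ℤ → ZMod q) hD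
    push_cast at hc
    rw [ZMod.natCast_self] at hc
    rw [hc]
    ring
  set t : ZMod q := s * ((D:ℤ) : ZMod q) with htdef
  have h9 : t * t = -((D:ℤ) : ZMod q) := by
    rw [htdef]
    have e1 : s * ((D:ℤ):ZMod q) * (s * ((D:ℤ):ZMod q))
        = (s * s) * (((D:ℤ):ZMod q) * ((D:ℤ):ZMod q)) := by ring
    rw [e1, ← hs]
    have e2 : -((n:ℕ) : ZMod q) * (((D:ℤ):ZMod q) * ((D:ℤ):ZMod q))
        = -((((n:ℕ):ZMod q) * ((D:ℤ):ZMod q)) * ((D:ℤ):ZMod q)) := by ring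
    rw [e2, hnD1, one_mul]
  set b : ℤ := (t.val : ℤ) with hbdef
  have hbq : (q:ℤ) ∣ b^2 + D := by
    apply (ZMod.intCast_zmod_eq_zero_iff_dvd _ q).mp
    rw [hbdef]
    push_cast
    rw [ZMod.natCast_rightInverse t]
    rw [sq, h9]
    ring
  set c : ℤ := (b^2 + D)/q with hcdef
  have hc : (q:ℤ) * c = b^2 + D := Int.mul_ediv_cancel' hbq
  obtain ⟨x, y, z, hxyz⟩ := rep_of_data (n:ℤ) (q:ℤ) b c 1 D 1 hn0 hq0 hDpos le_rfl
    (by norm_num) (by linarith) (by linear_combination hD)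
  exact ⟨x, y, z, by linarith⟩

theorem rep_delta2 (n q : ℕ) (hn : 0 < n) (hq : q.Prime) (hqgt : n < q) (hq2 : 2 < q)
    (hdvd : (2*(n:ℤ)) ∣ 2 + (q:ℤ) * ((n:ℤ)+1)^2) (hsq : IsSquare (-((n:ℕ) : ZMod q))) :
    ∃ x y z : ℤ, x^2 + y^2 + z^2 = (n:ℤ) := by
  haveI : Fact q.Prime := ⟨hq⟩
  have hq0 : 0 < (q:ℤ) := by exact_mod_cast hq.pos
  have hn0 : 0 < (n:ℤ) := by exact_mod_cast hn
  set D : ℤ := (2 + (q:ℤ) * ((n:ℤ)+1)^2) / (2*n) with hDdef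
  have hD : (2*(n:ℤ)) * D = 2 + (q:ℤ) * ((n:ℤ)+1)^2 := Int.mul_ediv_cancel' hdvd
  have hDpos : 0 < D := by nlinarith [sq_nonneg ((n:ℤ)+1)]
  have h2ne : (2 : ZMod q) ≠ 0 := by
    intro h0
    have h2d : q ∣ 2 := by
      have : ((2:ℕ) : ZMod q) = 0 := by exact_mod_cast h0
      exact (ZMod.natCast_eq_zero_iff 2 q).mp this
    have := Nat.le_of_dvd (by norm_num) h2d
    omega
  obtain ⟨s, hs⟩ := hsq
  have hnD1 : ((n:ℕ) : ZMod q) * ((D : ℤ) : ZMod q) = 1 := by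
    have hc := congrArg (Int.cast : ℤ → ZMod q) hD
    push_cast at hc
    rw [ZMod.natCast_self] at hc
    have h22 : (2 : ZMod q) * (((n:ℕ) : ZMod q) * ((D : ℤ) : ZMod q)) = 2 * 1 := by
      rw [mul_one]
      linear_combination hc
    exact mul_left_cancel₀ h2ne h22
  set t : ZMod q := s * ((D:ℤ) : ZMod q) with htdef
  have h9 : t * t = -((D:ℤ) : ZMod q) := by
    rw [htdef]
    have e1 : s * ((D:ℤ):ZMod q) * (s * ((D:ℤ):ZMod q))
        = (s * s) * (((D:ℤ):ZMod q) * ((D:ℤ):ZMod q)) := by ring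
    rw [e1, ← hs]
    have e2 : -((n:ℕ) : ZMod q) * (((D:ℤ):ZMod q) * ((D:ℤ):ZMod q))
        = -((((n:ℕ):ZMod q) * ((D:ℤ):ZMod q)) * ((D:ℤ):ZMod q)) := by ring
    rw [e2, hnD1, one_mul]
  set b : ℤ := (t.val : ℤ) with hbdef
  have hbq : (q:ℤ) ∣ b^2 + D := by
    apply (ZMod.intCast_zmod_eq_zero_iff_dvd _ q).mp
    rw [hbdef]
    push_cast
    rw [ZMod.natCast_rightInverse t]
    rw [sq, h9]
    ring
  set c : ℤ := (b^2 + D)/q with hcdef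
  have hc : (q:ℤ) * c = b^2 + D := Int.mul_ediv_cancel' hbq
  obtain ⟨x, y, z, hxyz⟩ := rep_of_data (n:ℤ) (q:ℤ) b c ((n:ℤ)+1) D 2 hn0 hq0 hDpos
    (by norm_num) le_rfl (by linarith) (by linear_combination hD)
  exact conv2 (n:ℤ) x y z (by linarith)

theorem dirichlet_class (M a r8 : ℕ) (hM : 0 < M) (hModd : M % 2 = 1)
    (hr8 : r8 = 1 ∨ r8 = 5) (hacop : Nat.Coprime a M) (bound : ℕ) :
    ∃ q : ℕ, q.Prime ∧ bound < q ∧ q % 8 = r8 ∧ q ≡ a [MOD M] := by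
  haveI : NeZero (8 * M) := ⟨by omega⟩
  haveI : NeZero M := ⟨by omega⟩
  have hcop8 : Nat.Coprime 8 M := by
    rw [show (8:ℕ) = 2^3 by norm_num]
    exact Nat.Coprime.pow_left 3 ((Nat.Prime.coprime_iff_not_dvd Nat.prime_two).mpr (by omega))
  obtain ⟨R, hR8, hRM⟩ := Nat.chineseRemainder hcop8 r8 a
  have hRu : IsUnit ((R : ℕ) : ZMod (8 * M)) := by
    rw [ZMod.isUnit_iff_coprime]
    apply Nat.Coprime.mul_right
    · have hR2 : (R:ℕ) % 2 = 1 := by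
        have h := hR8
        unfold Nat.ModEq at h
        rcases hr8 with h1 | h1 <;> omega
      rw [show (8:ℕ) = 2^3 by norm_num]
      refine Nat.Coprime.pow_right 3 ?_
      exact Nat.coprime_comm.mp ((Nat.Prime.coprime_iff_not_dvd Nat.prime_two).mpr (by omega))
    · have hcast : ((R:ℕ) : ZMod M) = (a : ZMod M) := (ZMod.natCast_eq_natCast_iff _ _ _).mpr hRM
      have hu : IsUnit ((R:ℕ) : ZMod M) := by
        rw [hcast, ZMod.isUnit_iff_coprime]
        exact hacop
      rwa [ZMod.isUnit_iff_coprime] at hu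
  obtain ⟨q, hqgt, hqp, hqmod⟩ := Nat.forall_exists_prime_gt_and_eq_mod hRu bound
  have hqR : q ≡ R [MOD 8 * M] := (ZMod.natCast_eq_natCast_iff _ _ _).mp hqmod
  refine ⟨q, hqp, hqgt, ?_, (hqR.of_dvd (dvd_mul_left M 8)).trans hRM⟩
  have h1 : q ≡ r8 [MOD 8] := (hqR.of_dvd (dvd_mul_right 8 M)).trans hR8
  unfold Nat.ModEq at h1
  rcases hr8 with h | h <;> omega

theorem isSquare_of_jac (n q : ℕ) [Fact q.Prime] (hjac : jacobiSym (-(n:ℤ)) q = 1) :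
    IsSquare (-((n:ℕ) : ZMod q)) := by
  have h := ZMod.isSquare_of_jacobiSym_eq_one hjac
  have e : ((-(n:ℤ) : ℤ) : ZMod q) = -((n:ℕ) : ZMod q) := by push_cast; ring
  rwa [e] at h

theorem rep_squarefree (n : ℕ) (hn : 0 < n) (hsf : Squarefree n)
    (h8 : n % 8 = 1 ∨ n % 8 = 2 ∨ n % 8 = 3 ∨ n % 8 = 5 ∨ n % 8 = 6) :
    ∃ x y z : ℤ, x^2 + y^2 + z^2 = (n : ℤ) := by
  by_cases hn1 : n = 1
  · exact ⟨1, 0, 0, by rw [hn1]; norm_num⟩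
  by_cases hn2 : n = 2
  · exact ⟨1, 1, 0, by rw [hn2]; norm_num⟩
  have hn3 : 3 ≤ n := by omega
  have hnsq : ¬ (4 ∣ n) := by
    intro hd
    have h4 : (2:ℕ) * 2 ∣ n := by
      have : (2:ℕ) * 2 = 4 := by norm_num
      rw [this]; exact hd
    have := hsf 2 h4
    rw [Nat.isUnit_iff] at this
    omega
  by_cases hpar : n % 2 = 1
  · -- n odd
    by_cases hc3 : n % 8 = 3
    · -- delta 2 branch
      have hacop2 : Nat.Coprime (n-2) n := by
        have hd1 : Nat.gcd (n-2) n ∣ n - (n-2) :=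
          Nat.dvd_sub (Nat.gcd_dvd_right _ n) (Nat.gcd_dvd_left _ n)
        have h2 : n - (n-2) = 2 := by omega
        rw [h2] at hd1
        rcases (Nat.dvd_prime Nat.prime_two).mp hd1 with h | h
        · exact h
        · exfalso
          have h2n : (2:ℕ) ∣ n := h ▸ Nat.gcd_dvd_right (n-2) n
          omega
      obtain ⟨q, hqp, hqgt, hq8, hqa⟩ := dirichlet_class n (n-2) 1 (by omega) hpar
        (Or.inl rfl) hacop2 n
      haveI : Fact q.Prime := ⟨hqp⟩
      have hjac := jac_three n q hn3 hc3 (by omega) hqa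
      have hsq := isSquare_of_jac n q hjac
      apply rep_delta2 n q hn hqp hqgt (by omega) ?_ hsq
      have hqm : (q:ℤ) % (n:ℤ) = (-(2:ℤ)) % (n:ℤ) := by
        have := nmod n q 2 (by omega) (by omega) hqa
        exact_mod_cast this
      have hd0 : (n:ℤ) ∣ (-(2:ℤ)) - (q:ℤ) := Int.ModEq.dvd hqm
      have h2 : (n:ℤ) ∣ (q:ℤ) + 2 := by
        rcases hd0 with ⟨k, hk⟩
        exact ⟨-k, by linarith⟩
      have h1 : (n:ℤ) ∣ 2 + ((n:ℤ)-2)*((n:ℤ)+1)^2 := ⟨(n:ℤ)^2 - 3, by ring⟩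
      have h3 : (n:ℤ) ∣ ((q:ℤ) - ((n:ℤ)-2)) := by
        rcases h2 with ⟨k, hk⟩
        exact ⟨k - 1, by linarith⟩
      have hA : (n:ℤ) ∣ 2 + (q:ℤ)*((n:ℤ)+1)^2 := by
        rw [show 2 + (q:ℤ)*((n:ℤ)+1)^2
            = (2 + ((n:ℤ)-2)*((n:ℤ)+1)^2) + ((q:ℤ) - ((n:ℤ)-2))*((n:ℤ)+1)^2 by ring]
        exact dvd_add h1 (h3.mul_right _)
      have hB : (2:ℤ) ∣ 2 + (q:ℤ)*((n:ℤ)+1)^2 := by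
        have hno : (2:ℤ) ∣ ((n:ℤ)+1) := by omega
        exact dvd_add dvd_rfl ((dvd_pow hno (by norm_num)).mul_left _)
      have hcop' : IsCoprime ((2:ℕ):ℤ) ((n:ℕ):ℤ) :=
        Nat.isCoprime_iff_coprime.mpr ((Nat.Prime.coprime_iff_not_dvd Nat.prime_two).mpr (by omega))
      have hcop : IsCoprime (2:ℤ) ((n:ℕ):ℤ) := by exact_mod_cast hcop'
      exact hcop.mul_dvd hB hA
    · -- delta 1 branch, n odd
      have h15 : n % 8 = 1 ∨ n % 8 = 5 := by omega
      have hacop1 : Nat.Coprime (n-1) n := by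
        have hd1 : Nat.gcd (n-1) n ∣ n - (n-1) :=
          Nat.dvd_sub (Nat.gcd_dvd_right _ n) (Nat.gcd_dvd_left _ n)
        have h2 : n - (n-1) = 1 := by omega
        rw [h2] at hd1
        exact Nat.dvd_one.mp hd1
      obtain ⟨q, hqp, hqgt, hq8, hqa⟩ := dirichlet_class n (n-1) 1 (by omega) hpar
        (Or.inl rfl) hacop1 n
      haveI : Fact q.Prime := ⟨hqp⟩
      have hjac := jac_odd n q hn3 h15 (by omega) hqa
      have hsq := isSquare_of_jac n q hjac
      apply rep_delta1 n q hn hqp hqgt ?_ hsq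
      have h1 : q + 1 ≡ (n-1) + 1 [MOD n] := hqa.add_right 1
      have h3 : (n-1) + 1 = n := by omega
      rw [h3] at h1
      have h4 : q + 1 ≡ 0 [MOD n] := h1.trans (Nat.modEq_zero_iff_dvd.mpr dvd_rfl)
      have h2 : (n:ℕ) ∣ q + 1 := Nat.modEq_zero_iff_dvd.mp h4
      have h5 := Int.natCast_dvd_natCast.mpr h2
      push_cast at h5
      exact h5
  · -- n even
    have hpar0 : n % 2 = 0 := by omega
    have hmodd : (n/2) % 2 = 1 := by omega
    set m : ℕ := n / 2 with hmdef
    have hnm : n = 2 * m := by omega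
    have hm3 : 3 ≤ m := by omega
    have hn26 : n % 8 = 2 ∨ n % 8 = 6 := by omega
    have hacop1 : Nat.Coprime (m-1) m := by
      have hd1 : Nat.gcd (m-1) m ∣ m - (m-1) :=
        Nat.dvd_sub (Nat.gcd_dvd_right _ m) (Nat.gcd_dvd_left _ m)
      have h2 : m - (m-1) = 1 := by omega
      rw [h2] at hd1
      exact Nat.dvd_one.mp hd1
    obtain ⟨q, hqp, hqgt, hq8, hqa⟩ := dirichlet_class m (m-1)
      (if n % 8 = 2 then 1 else 5) (by omega) hmodd
      (by split_ifs; exacts [Or.inl rfl, Or.inr rfl]) hacop1 n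
    haveI : Fact q.Prime := ⟨hqp⟩
    have hq8' : (q % 8 = 1 ∧ m % 4 = 1) ∨ (q % 8 = 5 ∧ m % 4 = 3) := by
      rcases hn26 with h | h
      · left
        rw [if_pos h] at hq8
        exact ⟨hq8, by omega⟩
      · right
        rw [if_neg (by omega)] at hq8
        exact ⟨hq8, by omega⟩
    have hjac0 := jac_even m q (by omega) hmodd hq8' hqa
    have hjac : jacobiSym (-(n:ℤ)) q = 1 := by
      rw [show (-(n:ℤ)) = -(2*(m:ℤ)) by rw [hnm]; push_cast; ring]
      exact hjac0
    have hsq := isSquare_of_jac n q hjac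
    apply rep_delta1 n q hn hqp hqgt ?_ hsq
    have hqodd : q % 2 = 1 := by
      rcases hq8' with ⟨h, _⟩ | ⟨h, _⟩ <;> omega
    have h2d : (2:ℕ) ∣ q + 1 := by omega
    have h1 : q + 1 ≡ (m-1) + 1 [MOD m] := hqa.add_right 1
    have h3 : (m-1) + 1 = m := by omega
    rw [h3] at h1
    have h4 : q + 1 ≡ 0 [MOD m] := h1.trans (Nat.modEq_zero_iff_dvd.mpr dvd_rfl)
    have hmd : m ∣ q + 1 := Nat.modEq_zero_iff_dvd.mp h4
    have hnd : n ∣ q + 1 := by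
      rw [hnm]
      exact Nat.Coprime.mul_dvd_of_dvd_of_dvd
        ((Nat.Prime.coprime_iff_not_dvd Nat.prime_two).mpr (by omega)) h2d hmd
    have h5 := Int.natCast_dvd_natCast.mpr hnd
    push_cast at h5
    exact h5

end ThreeSq

/-- Legendre's three-square theorem: a shell of norm `m > 0` of `ℤ³` is
empty iff `m = 4ᵃ(8b+7)`. -/
theorem three_squares (m : ℕ) (hm : 0 < m) :
    (¬ ∃ x : Fin 3 → ℤ, ∑ i, (x i) ^ 2 = (m : ℤ)) ↔
      ∃ a b : ℕ, m = 4 ^ a * (8 * b + 7) := by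
  constructor
  · intro hno
    by_contra hbad
    apply hno
    obtain ⟨t, k, hmk, hsf⟩ := Nat.sq_mul_squarefree m
    have hk0 : k ≠ 0 := by
      rintro rfl
      simp at hmk
      omega
    have ht0 : 0 < t := by
      rcases Nat.eq_zero_or_pos t with h | h
      · rw [h, mul_zero] at hmk; omega
      · exact h
    have ht8 : t % 8 ≠ 7 := by
      intro h7
      obtain ⟨s, u, hu2, hku⟩ := Nat.exists_eq_pow_mul_and_not_dvd hk0 2 (by norm_num)
      apply hbad
      refine ⟨s, (u^2 * t - 7)/8, ?_⟩
      have hu8 : u^2 % 8 = 1 := by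
        have h := Nat.pow_mod u 2 8
        have h18 : u % 8 = 1 ∨ u % 8 = 3 ∨ u % 8 = 5 ∨ u % 8 = 7 := by omega
        rcases h18 with h1|h1|h1|h1 <;> rw [h, h1] <;> norm_num
      have hut : (u^2 * t) % 8 = 7 := by
        rw [Nat.mul_mod, hu8, h7]
      have hm4 : m = 4^s * (u^2*t) := by
        have h44 : (4:ℕ)^s = 2^s * 2^s := by
          rw [show (4:ℕ) = 2*2 by norm_num, mul_pow]
        rw [← hmk, hku, mul_pow, h44]
        ring
      have hX : u^2*t = 8*((u^2*t - 7)/8) + 7 := by omega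
      rw [hm4]
      exact congrArg (fun X => 4^s * X) hX
    have ht4 : ¬ (4 ∣ t) := by
      intro hd
      have h4 : (2:ℕ) * 2 ∣ t := by
        have : (2:ℕ) * 2 = 4 := by norm_num
        rw [this]; exact hd
      have := hsf 2 h4
      rw [Nat.isUnit_iff] at this
      omega
    have h8 : t % 8 = 1 ∨ t % 8 = 2 ∨ t % 8 = 3 ∨ t % 8 = 5 ∨ t % 8 = 6 := by omega
    obtain ⟨x, y, z, hxyz⟩ := ThreeSq.rep_squarefree t ht0 hsf h8
    refine ⟨![(k:ℤ)*x, (k:ℤ)*y, (k:ℤ)*z], ?_⟩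
    rw [Fin.sum_univ_three]
    simp only [ThreeSq.v3_0, ThreeSq.v3_1, ThreeSq.v3_2]
    have hmc : (m:ℤ) = (k:ℤ)^2 * (t:ℤ) := by
      rw [← hmk]
      push_cast
      ring
    rw [hmc, ← hxyz]
    ring
  · rintro ⟨a, b, hab⟩ ⟨x, hx⟩
    rw [Fin.sum_univ_three] at hx
    apply ThreeSq.no_rep_aux a ((8*b+7 : ℕ) : ℤ) (x 0) (x 1) (x 2) (by push_cast; omega)
    rw [hx, hab]
    push_cast
    ring
end
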